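/- arXiv:1103.0444 — 6 statements merged into one kernel-verified Lean document; each statement's English description precedes it below -/
import Mathlib

section
/- Let d ≥ 1 and k ≥ 2d be integers and k₀ = ⌊k/2⌋. Then ϑ(complement of K_{k/d}) equals the maximum of k·f_0 over all tuples (f_0, …, f_{k₀}) of real numbers satisfying f_j ≥ 0 for all j, Σ_{j=0}^{k₀} f_j = 1, and Σ_{j=0}^{k₀} f_j cos(2jℓπ/k) = 0 for every 1 ≤ ℓ ≤ d−1. -/
open Real Polynomial Finset

noncomputable section

lemma sum_exp_eq_zero (k : ℕ) (m : ℤ) (hk : 0 < k) (h : ¬ (k : ℤ) ∣ m) :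
    ∑ ℓ ∈ Finset.range k, Complex.exp (((2 * π * ℓ * m / k : ℝ)) * Complex.I) = 0 := by
  have hkr : (k : ℝ) ≠ 0 := by positivity
  set z : ℂ := Complex.exp ((2 * π * m / k : ℝ) * Complex.I) with hz
  have hzk : z ^ k = 1 := by
    rw [hz, ← Complex.exp_nat_mul]
    have hkc : (k : ℂ) ≠ 0 := by exact_mod_cast hkr
    have : (k : ℂ) * (((2 * π * m / k : ℝ)) * Complex.I) = (m : ℤ) * (2 * π * Complex.I) := by
      push_cast
      field_simp
    rw [this, Complex.exp_int_mul_two_pi_mul_I]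
  have hz1 : z ≠ 1 := by
    rw [hz, Ne, Complex.exp_eq_one_iff]
    rintro ⟨n, hn⟩
    apply h
    have h2 : ((2 * π * m / k : ℝ) : ℂ) * Complex.I = (((n : ℝ) * (2 * π) : ℝ) : ℂ) * Complex.I := by
      rw [hn]; push_cast; ring
    have hI : ((2 * π * m / k : ℝ) : ℂ) = (((n : ℝ) * (2 * π) : ℝ) : ℂ) :=
      mul_right_cancel₀ Complex.I_ne_zero h2
    have hR : (2 * π * m / k : ℝ) = (n : ℝ) * (2 * π) := by exact_mod_cast hI
    have : (m : ℝ) = (k : ℝ) * n := by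
      field_simp at hR
      nlinarith [hR, Real.pi_pos]
    exact ⟨n, by exact_mod_cast this⟩
  have hterm : ∀ ℓ : ℕ, Complex.exp (((2 * π * ℓ * m / k : ℝ)) * Complex.I) = z ^ ℓ := by
    intro ℓ
    rw [hz, ← Complex.exp_nat_mul]
    congr 1
    push_cast
    ring
  calc ∑ ℓ ∈ Finset.range k, Complex.exp (((2 * π * ℓ * m / k : ℝ)) * Complex.I)
      = ∑ ℓ ∈ Finset.range k, z ^ ℓ := Finset.sum_congr rfl fun ℓ _ => hterm ℓ
    _ = 0 := by rw [geom_sum_eq hz1, hzk]; simp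

lemma sum_cos_dvd (k : ℕ) (hk : 0 < k) (m : ℤ) :
    ∑ ℓ ∈ Finset.range k, Real.cos (2 * π * ℓ * m / k) =
      if (k : ℤ) ∣ m then (k : ℝ) else 0 := by
  by_cases h : (k : ℤ) ∣ m
  · obtain ⟨q, rfl⟩ := h
    rw [if_pos ⟨q, rfl⟩]
    have hkr : (k : ℝ) ≠ 0 := by positivity
    have h1 : ∑ ℓ ∈ Finset.range k, Real.cos (2 * π * ℓ * (((k : ℤ) * q : ℤ) : ℝ) / k)
        = ∑ ℓ ∈ Finset.range k, (1 : ℝ) := by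
      apply Finset.sum_congr rfl
      intro ℓ _
      have h2 := Real.cos_int_mul_two_pi ((ℓ : ℤ) * q)
      convert h2 using 2
      push_cast
      field_simp
    rw [h1]
    simp
  · rw [if_neg h]
    have := sum_exp_eq_zero k m hk h
    have h2 : ∀ ℓ : ℕ, Real.cos (2 * π * ℓ * m / k)
        = (Complex.exp (((2 * π * ℓ * m / k : ℝ)) * Complex.I)).re := fun ℓ =>
      (Complex.exp_ofReal_mul_I_re _).symm
    calc ∑ ℓ ∈ Finset.range k, Real.cos (2 * π * ℓ * m / k)
        = (∑ ℓ ∈ Finset.range k, Complex.exp (((2 * π * ℓ * m / k : ℝ)) * Complex.I)).re := by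
          rw [Complex.re_sum]; exact Finset.sum_congr rfl fun ℓ _ => h2 ℓ
      _ = 0 := by rw [this]; simp

lemma sum_sin_not_dvd (k : ℕ) (hk : 0 < k) (m : ℤ) (h : ¬ (k : ℤ) ∣ m) :
    ∑ ℓ ∈ Finset.range k, Real.sin (2 * π * ℓ * m / k) = 0 := by
  have := sum_exp_eq_zero k m hk h
  have h2 : ∀ ℓ : ℕ, Real.sin (2 * π * ℓ * m / k)
      = (Complex.exp (((2 * π * ℓ * m / k : ℝ)) * Complex.I)).im := fun ℓ =>
    (Complex.exp_ofReal_mul_I_im _).symm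
  calc ∑ ℓ ∈ Finset.range k, Real.sin (2 * π * ℓ * m / k)
      = (∑ ℓ ∈ Finset.range k, Complex.exp (((2 * π * ℓ * m / k : ℝ)) * Complex.I)).im := by
        rw [Complex.im_sum]; exact Finset.sum_congr rfl fun ℓ _ => h2 ℓ
    _ = 0 := by rw [this]; simp

lemma fold_sum (k k₀ : ℕ) (hk : 1 ≤ k) (hk₀ : k₀ = k / 2) (G : ℕ → ℝ) :
    ∑ ℓ ∈ Finset.range k, G ℓ =
      ∑ j ∈ Finset.range (k₀ + 1), (G j + if j = 0 ∨ 2 * j = k then 0 else G (k - j)) := by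
  rw [Finset.sum_add_distrib]
  have hsplit : Finset.range k = Finset.range (k₀ + 1) ∪ Finset.Ico (k₀ + 1) k := by
    rw [Finset.range_eq_Ico, Finset.range_eq_Ico]; rw [Finset.Ico_union_Ico_eq_Ico] <;> omega
  rw [hsplit, Finset.sum_union (by
    rw [Finset.range_eq_Ico]
    exact Finset.Ico_disjoint_Ico_consecutive 0 (k₀ + 1) k)]
  congr 1
  have h2 : ∑ j ∈ Finset.range (k₀ + 1), (if j = 0 ∨ 2 * j = k then (0:ℝ) else G (k - j))
      = ∑ j ∈ (Finset.range (k₀ + 1)).filter (fun j => ¬(j = 0 ∨ 2 * j = k)), G (k - j) := by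
    rw [Finset.sum_filter]
    apply Finset.sum_congr rfl
    intro j _
    by_cases h : j = 0 ∨ 2 * j = k <;> simp [h]
  rw [h2]
  apply Finset.sum_nbij' (i := fun ℓ => k - ℓ) (j := fun j => k - j)
  · intro a ha
    simp only [Finset.mem_Ico] at ha
    simp only [Finset.mem_filter, Finset.mem_range]
    omega
  · intro a ha
    simp only [Finset.mem_filter, Finset.mem_range] at ha
    simp only [Finset.mem_Ico]
    omega
  · intro a ha
    simp only [Finset.mem_Ico] at ha
    omega
  · intro a ha
    simp only [Finset.mem_filter, Finset.mem_range] at ha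
    omega
  · intro a ha
    simp only [Finset.mem_Ico] at ha
    congr 1
    omega

lemma cos_quad {n : Type*} [Fintype n] (θ v : n → ℝ) :
    (∑ x, v x * Real.cos (θ x))^2 + (∑ x, v x * Real.sin (θ x))^2
      = ∑ x, ∑ y, v x * v y * Real.cos (θ x - θ y) := by
  rw [sq, sq, Finset.sum_mul_sum, Finset.sum_mul_sum, ← Finset.sum_add_distrib]
  apply Finset.sum_congr rfl; intro x _
  rw [← Finset.sum_add_distrib]
  apply Finset.sum_congr rfl; intro y _
  rw [Real.cos_sub]; ring

lemma cos_shift (k j : ℕ) (hk : 0 < k) (m : ℤ) (t : ℕ)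
    (h : (k : ℤ) ∣ (m - t) ∨ (k : ℤ) ∣ (m + t)) :
    Real.cos (2 * π * j * (m : ℝ) / k) = Real.cos (2 * j * t * π / k) := by
  have hkr : (k : ℝ) ≠ 0 := by positivity
  rcases h with ⟨n, hn⟩ | ⟨n, hn⟩
  · have hm : (m : ℝ) = t + n * k := by
      have : m = t + k * n := by omega
      rw [this]; push_cast; ring
    rw [hm]
    have harg : 2 * π * j * ((t : ℝ) + n * k) / k
        = 2 * j * t * π / k + ((j : ℤ) * n : ℤ) * (2 * π) := by
      push_cast; field_simp
    rw [harg, Real.cos_add_int_mul_two_pi]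
  · have hm : (m : ℝ) = -t + n * k := by
      have : m = -t + k * n := by omega
      rw [this]; push_cast; ring
    rw [hm]
    have harg : 2 * π * j * (-(t : ℝ) + n * k) / k
        = -(2 * j * t * π / k) + ((j : ℤ) * n : ℤ) * (2 * π) := by
      push_cast; field_simp
    rw [harg, Real.cos_add_int_mul_two_pi, Real.cos_neg]


/-- The circular complete graph `K_{k/d}`: vertices `0,…,k-1`, with `i ~ j` iff
`d ≤ |i-j| ≤ k-d`. -/
def circularCompleteGraph (k d : ℕ) : SimpleGraph (Fin k) where
  Adj i j := i ≠ j ∧ (d : ℤ) ≤ |((i : ℕ) : ℤ) - ((j : ℕ) : ℤ)| ∧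
      |((i : ℕ) : ℤ) - ((j : ℕ) : ℤ)| ≤ (k : ℤ) - d
  symm := by
    refine ⟨?_⟩
    rintro i j ⟨hne, h1, h2⟩
    exact ⟨hne.symm, by rwa [abs_sub_comm], by rwa [abs_sub_comm]⟩
  loopless := by refine ⟨?_⟩; rintro i ⟨h, -, -⟩; exact h rfl

/-- The Lovász theta number of a finite graph, as the maximum of `∑_{x,y} B x y` over
symmetric positive semidefinite matrices `B` with trace `1` vanishing on edges. -/
def lovaszTheta {V : Type*} [Fintype V] (G : SimpleGraph V) : ℝ :=
  sSup {r : ℝ | ∃ B : Matrix V V ℝ, B.PosSemidef ∧ (∑ x, B x x) = 1 ∧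
    (∀ x y, G.Adj x y → B x y = 0) ∧ r = ∑ x, ∑ y, B x y}

/-- The theta number of the complement of `K_{k/d}` as the optimal value of a linear
program (primal form). -/
theorem theta_circular_LP (k d : ℕ) (hd : 1 ≤ d) (hk : 2 * d ≤ k)
    (k₀ : ℕ) (hk₀ : k₀ = k / 2) :
    lovaszTheta (circularCompleteGraph k d)ᶜ =
      sSup {r : ℝ | ∃ f : ℕ → ℝ, (∀ j, j ≤ k₀ → 0 ≤ f j) ∧
        (∑ j ∈ Finset.range (k₀ + 1), f j) = 1 ∧
        (∀ ℓ : ℕ, 1 ≤ ℓ → ℓ ≤ d - 1 →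
          ∑ j ∈ Finset.range (k₀ + 1), f j * Real.cos (2 * j * ℓ * Real.pi / k) = 0) ∧
        r = k * f 0} := by
  have hk1 : 0 < k := by omega
  have hkr : (k : ℝ) ≠ 0 := by positivity
  have hkRpos : (0 : ℝ) < k := by positivity
  unfold lovaszTheta
  congr 1
  ext r
  simp only [Set.mem_setOf_eq]
  constructor
  · rintro ⟨B, ⟨hherm, hpsd⟩, htr, hE, hr⟩
    obtain ⟨lam, hlam⟩ : ∃ lam : ℕ → ℝ, ∀ ℓ : ℕ, lam ℓ = (1 / (k : ℝ)) *
        ∑ x : Fin k, ∑ y : Fin k, B x y *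
          Real.cos (2 * π * ℓ * (((x : ℕ) : ℝ) - ((y : ℕ) : ℝ)) / k) := ⟨_, fun ℓ => rfl⟩
    have hQ : ∀ v : Fin k → ℝ, 0 ≤ ∑ x, v x * ∑ y, B x y * v y := by
      intro v
      have h := (Matrix.posSemidef_iff_dotProduct_mulVec.mp ⟨hherm, hpsd⟩).2 v
      have hdp : dotProduct (star v) (B.mulVec v) = ∑ x, v x * ∑ y, B x y * v y := by
        simp [dotProduct, Matrix.mulVec]
      rwa [hdp] at h
    have hlam_nonneg : ∀ ℓ : ℕ, 0 ≤ lam ℓ := by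
      intro ℓ
      have hu := hQ fun x : Fin k => Real.cos (2 * π * ℓ * ((x : ℕ) : ℝ) / k)
      have hw := hQ fun x : Fin k => Real.sin (2 * π * ℓ * ((x : ℕ) : ℝ) / k)
      have key : ∑ x : Fin k, ∑ y : Fin k, B x y *
            Real.cos (2 * π * ℓ * (((x : ℕ) : ℝ) - ((y : ℕ) : ℝ)) / k)
          = (∑ x : Fin k, Real.cos (2 * π * ℓ * ((x : ℕ) : ℝ) / k) *
              ∑ y : Fin k, B x y * Real.cos (2 * π * ℓ * ((y : ℕ) : ℝ) / k))
            + ∑ x : Fin k, Real.sin (2 * π * ℓ * ((x : ℕ) : ℝ) / k) *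
              ∑ y : Fin k, B x y * Real.sin (2 * π * ℓ * ((y : ℕ) : ℝ) / k) := by
        rw [← Finset.sum_add_distrib]
        apply Finset.sum_congr rfl
        intro x _
        rw [Finset.mul_sum, Finset.mul_sum, ← Finset.sum_add_distrib]
        apply Finset.sum_congr rfl
        intro y _
        have harg : 2 * π * ℓ * (((x : ℕ) : ℝ) - ((y : ℕ) : ℝ)) / k
            = 2 * π * ℓ * ((x : ℕ) : ℝ) / k - 2 * π * ℓ * ((y : ℕ) : ℝ) / k := by ring
        rw [harg, Real.cos_sub]
        ring
      rw [hlam ℓ]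
      apply mul_nonneg (by positivity)
      rw [key]
      exact add_nonneg hu hw
    have hswap : ∀ c : ℕ → ℝ, ∑ ℓ ∈ Finset.range k, lam ℓ * c ℓ
        = (1 / (k : ℝ)) * ∑ x : Fin k, ∑ y : Fin k, B x y *
            ∑ ℓ ∈ Finset.range k,
              Real.cos (2 * π * ℓ * (((x : ℕ) : ℝ) - ((y : ℕ) : ℝ)) / k) * c ℓ := by
      intro c
      calc ∑ ℓ ∈ Finset.range k, lam ℓ * c ℓ
          = ∑ ℓ ∈ Finset.range k, ∑ x : Fin k, ∑ y : Fin k, (1 / (k : ℝ)) *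
              (B x y * (Real.cos (2 * π * ℓ * (((x : ℕ) : ℝ) - ((y : ℕ) : ℝ)) / k) * c ℓ)) := by
            apply Finset.sum_congr rfl
            intro ℓ _
            rw [hlam ℓ, mul_assoc, Finset.sum_mul, Finset.mul_sum]
            apply Finset.sum_congr rfl
            intro x _
            rw [Finset.sum_mul, Finset.mul_sum]
            apply Finset.sum_congr rfl
            intro y _
            ring
        _ = ∑ x : Fin k, ∑ y : Fin k, ∑ ℓ ∈ Finset.range k, (1 / (k : ℝ)) *
              (B x y * (Real.cos (2 * π * ℓ * (((x : ℕ) : ℝ) - ((y : ℕ) : ℝ)) / k) * c ℓ)) := by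
            rw [Finset.sum_comm]
            apply Finset.sum_congr rfl
            intro x _
            rw [Finset.sum_comm]
        _ = (1 / (k : ℝ)) * ∑ x : Fin k, ∑ y : Fin k, B x y *
              ∑ ℓ ∈ Finset.range k,
                Real.cos (2 * π * ℓ * (((x : ℕ) : ℝ) - ((y : ℕ) : ℝ)) / k) * c ℓ := by
            rw [Finset.mul_sum]
            apply Finset.sum_congr rfl
            intro x _
            rw [Finset.mul_sum]
            apply Finset.sum_congr rfl
            intro y _
            rw [Finset.mul_sum, Finset.mul_sum]
    have htotal : ∑ ℓ ∈ Finset.range k, lam ℓ = 1 := by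
      have h1 := hswap fun _ => 1
      simp only [mul_one] at h1
      rw [h1]
      have h2 : ∀ x y : Fin k, B x y * ∑ ℓ ∈ Finset.range k,
          Real.cos (2 * π * ℓ * (((x : ℕ) : ℝ) - ((y : ℕ) : ℝ)) / k)
          = (if y = x then B x x * (k : ℝ) else 0) := by
        intro x y
        have h3 : (∑ ℓ ∈ Finset.range k,
            Real.cos (2 * π * ℓ * (((x : ℕ) : ℝ) - ((y : ℕ) : ℝ)) / k))
            = if (k : ℤ) ∣ (((x : ℕ) : ℤ) - ((y : ℕ) : ℤ)) then (k : ℝ) else 0 := by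
          rw [show (∑ ℓ ∈ Finset.range k,
              Real.cos (2 * π * ℓ * (((x : ℕ) : ℝ) - ((y : ℕ) : ℝ)) / k))
              = ∑ ℓ ∈ Finset.range k,
                Real.cos (2 * π * ℓ * (((((x : ℕ) : ℤ) - ((y : ℕ) : ℤ) : ℤ)) : ℝ) / k) from
            Finset.sum_congr rfl fun ℓ _ => by push_cast; ring_nf]
          exact sum_cos_dvd k hk1 _
        rw [h3]
        by_cases hxy : y = x
        · subst hxy
          rw [if_pos, if_pos rfl]
          simp
        · rw [if_neg, if_neg hxy, mul_zero]
          rintro ⟨q, hq⟩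
          have hxk : (x : ℕ) < k := x.isLt
          have hyk : (y : ℕ) < k := y.isLt
          have hq0 : q = 0 := by
            have hkz : (0 : ℤ) < (k : ℤ) := by exact_mod_cast hk1
            rcases lt_trichotomy q 0 with h | h | h
            · have : (k : ℤ) * q ≤ (k : ℤ) * (-1) := by
                apply mul_le_mul_of_nonneg_left (by omega) (by omega)
              omega
            · exact h
            · have : (k : ℤ) * 1 ≤ (k : ℤ) * q := by
                apply mul_le_mul_of_nonneg_left (by omega) (by omega)
              omega
          rw [hq0, mul_zero] at hq
          exact hxy (Fin.ext (by omega))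
      rw [Finset.sum_congr rfl fun x _ => Finset.sum_congr rfl fun y _ => h2 x y]
      have h4 : ∀ x : Fin k, (∑ y : Fin k, if y = x then B x x * (k : ℝ) else 0)
          = B x x * (k : ℝ) := by
        intro x
        rw [Finset.sum_ite_eq' Finset.univ x fun _ => B x x * (k : ℝ),
          if_pos (Finset.mem_univ x)]
      rw [Finset.sum_congr rfl fun x _ => h4 x, ← Finset.sum_mul, htr, one_mul,
        one_div, inv_mul_cancel₀ hkr]
    have hconstr : ∀ t : ℕ, 1 ≤ t → t ≤ d - 1 →
        ∑ ℓ ∈ Finset.range k, lam ℓ * Real.cos (2 * ℓ * t * π / k) = 0 := by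
      intro t ht1 ht2
      rw [hswap fun ℓ => Real.cos (2 * ℓ * t * π / k)]
      have hz : ∀ x : Fin k, ∀ y : Fin k, B x y * ∑ ℓ ∈ Finset.range k,
          Real.cos (2 * π * ℓ * (((x : ℕ) : ℝ) - ((y : ℕ) : ℝ)) / k) *
            Real.cos (2 * ℓ * t * π / k) = 0 := by
        intro x y
        set m : ℤ := ((x : ℕ) : ℤ) - ((y : ℕ) : ℤ) with hm
        have hxk : (x : ℕ) < k := x.isLt
        have hyk : (y : ℕ) < k := y.isLt
        have hsum2 : (∑ ℓ ∈ Finset.range k,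
            Real.cos (2 * π * ℓ * (((x : ℕ) : ℝ) - ((y : ℕ) : ℝ)) / k) *
              Real.cos (2 * ℓ * t * π / k))
            = ((if (k : ℤ) ∣ (m + t) then (k : ℝ) else 0)
              + (if (k : ℤ) ∣ (m - t) then (k : ℝ) else 0)) / 2 := by
          have expand2 : ∀ ℓ : ℕ,
              Real.cos (2 * π * ℓ * (((x : ℕ) : ℝ) - ((y : ℕ) : ℝ)) / k) *
                Real.cos (2 * ℓ * t * π / k)
              = (Real.cos (2 * π * ℓ * (((m + t : ℤ)) : ℝ) / k)
                + Real.cos (2 * π * ℓ * (((m - t : ℤ)) : ℝ) / k)) / 2 := by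
            intro ℓ
            have hc1 : 2 * π * ℓ * (((m + t : ℤ)) : ℝ) / k
                = (2 * π * ℓ * (((x : ℕ) : ℝ) - ((y : ℕ) : ℝ)) / k)
                  + (2 * ℓ * t * π / k) := by
              rw [hm]; push_cast; ring
            have hc2 : 2 * π * ℓ * (((m - t : ℤ)) : ℝ) / k
                = (2 * π * ℓ * (((x : ℕ) : ℝ) - ((y : ℕ) : ℝ)) / k)
                  - (2 * ℓ * t * π / k) := by
              rw [hm]; push_cast; ring
            rw [hc1, hc2, Real.cos_add, Real.cos_sub]
            ring
          rw [Finset.sum_congr rfl fun ℓ _ => expand2 ℓ, ← Finset.sum_div,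
            Finset.sum_add_distrib, sum_cos_dvd k hk1 (m + t), sum_cos_dvd k hk1 (m - t)]
        rw [hsum2]
        by_cases h1 : ((k : ℤ) ∣ (m + t)) ∨ ((k : ℤ) ∣ (m - t))
        · have hkz : (0 : ℤ) < (k : ℤ) := by exact_mod_cast hk1
          have hmcase : m = -(t : ℤ) ∨ m = (k : ℤ) - t ∨ m = (t : ℤ) ∨ m = (t : ℤ) - k := by
            obtain ⟨q, hq⟩ | ⟨q, hq⟩ := h1
            · have hq01 : q = 0 ∨ q = 1 := by
                rcases lt_trichotomy q 0 with h | h | h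
                · have : (k : ℤ) * q ≤ (k : ℤ) * (-1) :=
                    mul_le_mul_of_nonneg_left (by omega) (by omega)
                  omega
                · exact Or.inl h
                · rcases lt_or_ge q 2 with h2 | h2
                  · omega
                  · have : (k : ℤ) * 2 ≤ (k : ℤ) * q :=
                      mul_le_mul_of_nonneg_left (by omega) (by omega)
                    omega
              rcases hq01 with rfl | rfl
              · left; omega
              · right; left; omega
            · have hq01 : q = 0 ∨ q = -1 := by
                rcases lt_trichotomy q 0 with h | h | h
                · rcases lt_or_ge (-2) q with h2 | h2
                  · omega
                  · have : (k : ℤ) * q ≤ (k : ℤ) * (-2) :=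
                      mul_le_mul_of_nonneg_left (by omega) (by omega)
                    omega
                · exact Or.inl h
                · have : (k : ℤ) * 1 ≤ (k : ℤ) * q :=
                    mul_le_mul_of_nonneg_left (by omega) (by omega)
                  omega
              rcases hq01 with rfl | rfl
              · right; right; left; omega
              · right; right; right; omega
          have hBxy : B x y = 0 := by
            apply hE
            rw [SimpleGraph.compl_adj]
            constructor
            · intro hxy
              have : (x : ℕ) = (y : ℕ) := by rw [hxy]
              omega
            · rintro ⟨-, hA, hB2⟩
              rw [show |((x : ℕ) : ℤ) - ((y : ℕ) : ℤ)| = (m.natAbs : ℤ) by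
                rw [← hm]; exact Int.abs_eq_natAbs m] at hA hB2
              omega
          rw [hBxy, zero_mul]
        · push_neg at h1
          rw [if_neg h1.1, if_neg h1.2]
          norm_num
      rw [Finset.sum_congr rfl fun x _ => Finset.sum_congr rfl fun y _ => hz x y]
      simp
    refine ⟨fun j => lam j + (if j = 0 ∨ 2 * j = k then 0 else lam (k - j)), ?_, ?_, ?_, ?_⟩
    · intro j hj
      beta_reduce
      by_cases hc : j = 0 ∨ 2 * j = k
      · rw [if_pos hc, add_zero]
        exact hlam_nonneg j
      · rw [if_neg hc]
        exact add_nonneg (hlam_nonneg j) (hlam_nonneg (k - j))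
    · beta_reduce
      rw [← fold_sum k k₀ (by omega) hk₀ lam]
      exact htotal
    · intro t ht1 ht2
      beta_reduce
      have hstep : ∀ j ∈ Finset.range (k₀ + 1),
          (lam j + if j = 0 ∨ 2 * j = k then 0 else lam (k - j)) *
            Real.cos (2 * j * t * π / k)
          = lam j * Real.cos (2 * j * t * π / k)
            + (if j = 0 ∨ 2 * j = k then 0
              else lam (k - j) * Real.cos (2 * ((k - j : ℕ) : ℝ) * t * π / k)) := by
        intro j hj
        by_cases hc : j = 0 ∨ 2 * j = k
        · rw [if_pos hc, if_pos hc, add_zero, add_zero]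
        · rw [if_neg hc, if_neg hc]
          have hjk : j ≤ k := by
            have := Finset.mem_range.mp hj
            omega
          have hcast : ((k - j : ℕ) : ℝ) = (k : ℝ) - (j : ℝ) := by
            push_cast [hjk]
            ring
          have hcos2 : Real.cos (2 * ((k - j : ℕ) : ℝ) * t * π / k)
              = Real.cos (2 * (j : ℝ) * t * π / k) := by
            rw [hcast]
            have harg : 2 * ((k : ℝ) - (j : ℝ)) * t * π / k
                = -(2 * (j : ℝ) * t * π / k) + ((t : ℤ)) * (2 * π) := by
              push_cast
              field_simp
              ring
            rw [harg, Real.cos_add_int_mul_two_pi, Real.cos_neg]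
          rw [hcos2]
          ring
      rw [Finset.sum_congr rfl hstep]
      have hfold := fold_sum k k₀ (by omega) hk₀
        fun ℓ => lam ℓ * Real.cos (2 * (ℓ : ℝ) * t * π / k)
      rw [← hfold]
      exact hconstr t ht1 ht2
    · beta_reduce
      rw [if_pos (Or.inl rfl), add_zero]
      have h0 : lam 0 = (1 / (k : ℝ)) * ∑ x : Fin k, ∑ y : Fin k, B x y := by
        rw [hlam 0]
        congr 1
        apply Finset.sum_congr rfl
        intro x _
        apply Finset.sum_congr rfl
        intro y _
        norm_num
      rw [h0, hr]
      field_simp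
  · rintro ⟨f, hf, hsum, hcos, hr⟩
    set B : Matrix (Fin k) (Fin k) ℝ := fun x y => (1 / (k : ℝ)) *
      ∑ j ∈ Finset.range (k₀ + 1),
        f j * Real.cos (2 * π * j * (((x : ℕ) : ℝ) - ((y : ℕ) : ℝ)) / k) with hBdef
    have hB : ∀ x y : Fin k, B x y = (1 / (k : ℝ)) *
        ∑ j ∈ Finset.range (k₀ + 1),
          f j * Real.cos (2 * π * j * (((x : ℕ) : ℝ) - ((y : ℕ) : ℝ)) / k) :=
      fun x y => rfl
    -- quadratic-form expansion
    have expand : ∀ w : Fin k → ℝ, (∑ x, w x * ∑ y, B x y * w y)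
        = (1 / (k : ℝ)) * ∑ j ∈ Finset.range (k₀ + 1), f j *
            ((∑ x : Fin k, w x * Real.cos (2 * π * j * ((x : ℕ) : ℝ) / k)) ^ 2
              + (∑ x : Fin k, w x * Real.sin (2 * π * j * ((x : ℕ) : ℝ) / k)) ^ 2) := by
      intro w
      have step1 : (∑ x, w x * ∑ y, B x y * w y)
          = ∑ x : Fin k, ∑ y : Fin k, ∑ j ∈ Finset.range (k₀ + 1), (1 / (k : ℝ)) *
              (f j * (w x * w y *
                Real.cos (2 * π * j * ((x : ℕ) : ℝ) / k - 2 * π * j * ((y : ℕ) : ℝ) / k))) := by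
        apply Finset.sum_congr rfl
        intro x _
        rw [Finset.mul_sum]
        apply Finset.sum_congr rfl
        intro y _
        rw [hB x y]
        have h1 : w x * (1 / (k : ℝ) *
            (∑ j ∈ Finset.range (k₀ + 1),
              f j * Real.cos (2 * π * j * (((x : ℕ) : ℝ) - ((y : ℕ) : ℝ)) / k)) * w y)
            = ∑ j ∈ Finset.range (k₀ + 1), (1 / (k : ℝ)) *
              (f j * (w x * w y *
                Real.cos (2 * π * j * (((x : ℕ) : ℝ) - ((y : ℕ) : ℝ)) / k))) := by
          rw [Finset.mul_sum, Finset.sum_mul, Finset.mul_sum]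
          apply Finset.sum_congr rfl
          intro j _
          ring
        rw [h1]
        apply Finset.sum_congr rfl
        intro j _
        have : 2 * π * j * (((x : ℕ) : ℝ) - ((y : ℕ) : ℝ)) / k
            = 2 * π * j * ((x : ℕ) : ℝ) / k - 2 * π * j * ((y : ℕ) : ℝ) / k := by ring
        rw [this]
      rw [step1]
      have swap1 : ∀ x : Fin k, ∑ y : Fin k, ∑ j ∈ Finset.range (k₀ + 1), (1 / (k : ℝ)) *
            (f j * (w x * w y *
              Real.cos (2 * π * j * ((x : ℕ) : ℝ) / k - 2 * π * j * ((y : ℕ) : ℝ) / k)))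
          = ∑ j ∈ Finset.range (k₀ + 1), ∑ y : Fin k, (1 / (k : ℝ)) *
            (f j * (w x * w y *
              Real.cos (2 * π * j * ((x : ℕ) : ℝ) / k - 2 * π * j * ((y : ℕ) : ℝ) / k))) :=
        fun x => Finset.sum_comm
      rw [Finset.sum_congr rfl (fun x _ => swap1 x), Finset.sum_comm, Finset.mul_sum]
      apply Finset.sum_congr rfl
      intro j _
      have pull : ∀ (c : ℝ) (h : Fin k → Fin k → ℝ),
          ∑ x : Fin k, ∑ y : Fin k, c * h x y = c * ∑ x : Fin k, ∑ y : Fin k, h x y := by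
        intro c h
        rw [Finset.mul_sum]
        apply Finset.sum_congr rfl
        intro x _
        rw [Finset.mul_sum]
      rw [pull (1 / (k : ℝ)), pull (f j)]
      rw [cos_quad (fun t : Fin k => 2 * π * j * ((t : ℕ) : ℝ) / k) w]
    have hsymm : ∀ x y : Fin k, B x y = B y x := by
      intro x y
      rw [hB x y, hB y x]
      congr 1
      apply Finset.sum_congr rfl
      intro j _
      congr 1
      rw [← Real.cos_neg (2 * π * j * (((y : ℕ) : ℝ) - ((x : ℕ) : ℝ)) / k)]
      congr 1
      ring
    refine ⟨B, Matrix.PosSemidef.of_dotProduct_mulVec_nonneg ?_ ?_, ?_, ?_, ?_⟩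
    · ext x y
      simp only [Matrix.conjTranspose_apply, star_trivial]
      exact hsymm y x
    · intro v
      have hdp : dotProduct (star v) (B.mulVec v) = ∑ x, v x * ∑ y, B x y * v y := by
        simp [dotProduct, Matrix.mulVec]
      rw [hdp, expand v]
      apply mul_nonneg (by positivity)
      apply Finset.sum_nonneg
      intro j hj
      exact mul_nonneg (hf j (Nat.lt_succ_iff.mp (Finset.mem_range.mp hj))) (by positivity)
    · have hdiag : ∀ x : Fin k, B x x = 1 / (k : ℝ) := by
        intro x
        rw [hB x x]
        have h1 : ∀ j ∈ Finset.range (k₀ + 1),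
            f j * Real.cos (2 * π * j * (((x : ℕ) : ℝ) - ((x : ℕ) : ℝ)) / k) = f j := by
          intro j _
          rw [sub_self]
          norm_num
        rw [Finset.sum_congr rfl h1, hsum, mul_one]
      rw [Finset.sum_congr rfl (fun x _ => hdiag x), Finset.sum_const, Finset.card_univ,
        Fintype.card_fin, nsmul_eq_mul, mul_one_div, div_self hkr]
    · intro x y hadj
      rw [SimpleGraph.compl_adj] at hadj
      obtain ⟨hne, hnadj⟩ := hadj
      have hnadj' : ¬(x ≠ y ∧ (d : ℤ) ≤ |((x : ℕ) : ℤ) - ((y : ℕ) : ℤ)| ∧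
          |((x : ℕ) : ℤ) - ((y : ℕ) : ℤ)| ≤ (k : ℤ) - d) := hnadj
      set m : ℤ := ((x : ℕ) : ℤ) - ((y : ℕ) : ℤ) with hm
      have hmabs : |m| = (m.natAbs : ℤ) := Int.abs_eq_natAbs m
      have hmne : m ≠ 0 := by
        intro h0
        apply hne
        have : (x : ℕ) = (y : ℕ) := by omega
        exact Fin.ext this
      have hxk : (x : ℕ) < k := x.isLt
      have hyk : (y : ℕ) < k := y.isLt
      have hcase : m.natAbs < d ∨ k - d < m.natAbs := by
        by_contra hcon
        push_neg at hcon
        exact hnadj' ⟨hne, by omega, by omega⟩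
      -- find t with 1 ≤ t ≤ d - 1 and m ≡ ±t mod k
      obtain ⟨t, ht1, ht2, hdvd⟩ : ∃ t : ℕ, 1 ≤ t ∧ t ≤ d - 1 ∧
          ((k : ℤ) ∣ (m - t) ∨ (k : ℤ) ∣ (m + t)) := by
        rcases hcase with hlt | hgt
        · refine ⟨m.natAbs, by omega, by omega, ?_⟩
          rcases Int.natAbs_eq m with he | he
          · exact Or.inl ⟨0, by omega⟩
          · exact Or.inr ⟨0, by omega⟩
        · refine ⟨k - m.natAbs, by omega, by omega, ?_⟩
          rcases Int.natAbs_eq m with he | he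
          · refine Or.inr ⟨1, by push_cast; omega⟩
          · refine Or.inl ⟨-1, by push_cast; omega⟩
      rw [hB x y]
      have hcast : ((x : ℕ) : ℝ) - ((y : ℕ) : ℝ) = (m : ℝ) := by
        rw [hm]; push_cast; ring
      have hsum0 : ∑ j ∈ Finset.range (k₀ + 1),
          f j * Real.cos (2 * π * j * (((x : ℕ) : ℝ) - ((y : ℕ) : ℝ)) / k) = 0 := by
        rw [show (∑ j ∈ Finset.range (k₀ + 1),
            f j * Real.cos (2 * π * j * (((x : ℕ) : ℝ) - ((y : ℕ) : ℝ)) / k))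
          = ∑ j ∈ Finset.range (k₀ + 1), f j * Real.cos (2 * j * t * π / k) from
          Finset.sum_congr rfl fun j _ => by
            rw [hcast, cos_shift k j hk1 m t hdvd]]
        exact hcos t ht1 ht2
      rw [hsum0, mul_zero]
    · rw [hr]
      have hexp := expand (fun _ => 1)
      simp only [one_mul, mul_one] at hexp
      rw [hexp]
      rw [Finset.sum_eq_single_of_mem 0 (Finset.mem_range.mpr (by omega)) ?_]
      · have hc0 : ∀ x : Fin k, Real.cos (2 * π * ((0 : ℕ) : ℝ) * ((x : ℕ) : ℝ) / k) = 1 := by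
          intro x
          norm_num
        have hs0 : ∀ x : Fin k, Real.sin (2 * π * ((0 : ℕ) : ℝ) * ((x : ℕ) : ℝ) / k) = 0 := by
          intro x
          norm_num
        rw [Finset.sum_congr rfl (fun x _ => hc0 x), Finset.sum_congr rfl (fun x _ => hs0 x),
          Finset.sum_const, Finset.sum_const, Finset.card_univ, Fintype.card_fin]
        simp only [nsmul_eq_mul, mul_one, mul_zero]
        field_simp
        ring
      · intro j hj hj0
        have hjk : ¬ ((k : ℤ) ∣ (j : ℤ)) := by
          rw [Int.natCast_dvd_natCast]
          intro hdd
          have := Nat.le_of_dvd (by omega) hdd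
          have hjle : j ≤ k₀ := Nat.lt_succ_iff.mp (Finset.mem_range.mp hj)
          omega
        have hC : ∑ x : Fin k, Real.cos (2 * π * (j : ℝ) * ((x : ℕ) : ℝ) / k) = 0 := by
          rw [Fin.sum_univ_eq_sum_range (fun i => Real.cos (2 * π * (j : ℝ) * (i : ℝ) / k)) k]
          rw [show (∑ i ∈ Finset.range k, Real.cos (2 * π * (j : ℝ) * (i : ℝ) / k))
              = ∑ i ∈ Finset.range k, Real.cos (2 * π * (i : ℝ) * (((j : ℤ)) : ℝ) / k) from
            Finset.sum_congr rfl fun i _ => by push_cast; ring_nf]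
          rw [sum_cos_dvd k hk1 (j : ℤ), if_neg hjk]
        have hS : ∑ x : Fin k, Real.sin (2 * π * (j : ℝ) * ((x : ℕ) : ℝ) / k) = 0 := by
          rw [Fin.sum_univ_eq_sum_range (fun i => Real.sin (2 * π * (j : ℝ) * (i : ℝ) / k)) k]
          rw [show (∑ i ∈ Finset.range k, Real.sin (2 * π * (j : ℝ) * (i : ℝ) / k))
              = ∑ i ∈ Finset.range k, Real.sin (2 * π * (i : ℝ) * (((j : ℤ)) : ℝ) / k) from
            Finset.sum_congr rfl fun i _ => by push_cast; ring_nf]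
          exact sum_sin_not_dvd k hk1 (j : ℤ) hjk
        rw [hC, hS]
        norm_num
end
end

section
/- Let d ≥ 2 and k ≥ 2d be integers with gcd(k,d) = 1, let a_n = cos(⌊nk/d⌋·2π/k) for 0 ≤ n ≤ d−1, let L_n(y) = ∏_{s≠n} (y − a_s)/(a_n − a_s) be the associated Lagrange polynomials, and write L_n = Σ_{ℓ=0}^{d−1} λ_{n,ℓ} T_ℓ in the Chebyshev basis. Then the d-tuples (λ_{0,0}, λ_{1,0}, …, λ_{d−1,0}) and (λ_{0,0}, λ_{0,1}, …, λ_{0,d−1}) are equal up to a permutation of their coordinates; that is, there is a permutation π of {0, …, d−1} with λ_{n,0} = λ_{0,π(n)} for all n. -/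
open Real Polynomial Finset

noncomputable section

/-- The tuple of `T_0`-coefficients `(λ_{n,0})_n` of the Lagrange polynomials in the
Chebyshev basis is a permutation of the tuple of Chebyshev coefficients
`(λ_{0,ℓ})_ℓ` of `L_0`. -/
theorem lagrange_chebyshev_coeff_permutation (k d : ℕ) (hd : 2 ≤ d) (hk : 2 * d ≤ k)
    (hcop : Nat.Coprime k d) (a : ℕ → ℝ)
    (ha : ∀ n, a n = Real.cos ((↑(n * k / d) : ℝ) * (2 * Real.pi / k)))
    (lam : ℕ → ℕ → ℝ)
    (hlam : ∀ n ∈ Finset.range d,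
      (∏ s ∈ (Finset.range d).erase n,
          Polynomial.C ((a n - a s)⁻¹) * (Polynomial.X - Polynomial.C (a s)))
        = ∑ ℓ ∈ Finset.range d,
            Polynomial.C (lam n ℓ) * Polynomial.Chebyshev.T ℝ (ℓ : ℤ)) :
    ∃ e : Equiv.Perm (Fin d), ∀ n : Fin d, lam n 0 = lam 0 (e n) := by
  haveI : NeZero d := ⟨by omega⟩
  have hk0 : 0 < k := by omega
  have hkR : (k : ℝ) ≠ 0 := by positivity
  -- notation: r n = n*k % d (the "permutation"), M n = n*k / d (angle numerators)
  set r : ℕ → ℕ := fun n => n * k % d with hr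
  set M : ℕ → ℕ := fun n => n * k / d with hM
  have hdm : ∀ n : ℕ, d * M n + r n = n * k := fun n => Nat.div_add_mod (n * k) d
  have hrlt : ∀ n : ℕ, r n < d := fun n => Nat.mod_lt _ (by omega)
  -- injectivity of r on range d
  have hrinj : ∀ m < d, ∀ n < d, r m = r n → m = n := by
    intro m hm n hn h
    have hmod : m * k ≡ n * k [MOD d] := h
    have := (Nat.ModEq.cancel_right_of_coprime (by rwa [Nat.gcd_comm]) hmod)
    have := this.eq_of_lt_of_lt hm hn
    exact this
  -- the permutation e
  have hfinj : Function.Injective (fun n : Fin d => (⟨r n, hrlt n⟩ : Fin d)) := by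
    intro m n h
    have : r m = r n := congrArg Fin.val h
    exact Fin.val_injective (hrinj _ m.isLt _ n.isLt this)
  let e : Equiv.Perm (Fin d) :=
    Equiv.ofBijective _ (Finite.injective_iff_bijective.mp hfinj)
  have he : ∀ n : Fin d, (e n : ℕ) = r n := fun n => rfl
  have he0 : e 0 = 0 := by
    apply Fin.val_injective
    rw [he]
    simp [hr]
  -- key divisibility
  have hcopZ : IsCoprime (k : ℤ) (d : ℤ) := by
    rw [Int.isCoprime_iff_gcd_eq_one]
    exact_mod_cast hcop
  have hdvd : ∀ p m : ℕ, (k : ℤ) ∣ (r p * M m : ℤ) - (r m * M p : ℤ) := by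
    intro p m
    apply hcopZ.dvd_of_dvd_mul_left
    have h1 : (d : ℤ) * M m + r m = m * k := by exact_mod_cast hdm m
    have h2 : (d : ℤ) * M p + r p = p * k := by exact_mod_cast hdm p
    exact ⟨(r p : ℤ) * m - (r m : ℤ) * p, by linear_combination (r p : ℤ) * h1 - (r m : ℤ) * h2⟩
  have hMfold : ∀ j : ℕ, j * k / d = M j := fun _ => rfl
  -- congruent angles give equal cosines
  have hcos : ∀ x y : ℕ, (k : ℤ) ∣ (x : ℤ) - (y : ℤ) →
      Real.cos (x * (2 * π / k)) = Real.cos (y * (2 * π / k)) := by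
    rintro x y ⟨t, ht⟩
    have hx : (x : ℝ) = y + k * t := by
      have : (x : ℤ) = y + k * t := by linarith [ht]
      exact_mod_cast this
    rw [hx]
    have : ((y : ℝ) + k * t) * (2 * π / k) = y * (2 * π / k) + t * (2 * π) := by
      field_simp
    rw [this, Real.cos_add_int_mul_two_pi]
  -- distinctness of the nodes
  have hane : ∀ m < d, ∀ n < d, m ≠ n → a m ≠ a n := by
    intro m hm n hn hne hEq
    have h2πk : (2 * π / k : ℝ) ≠ 0 := by
      apply div_ne_zero _ hkR
      positivity
    rw [ha, ha, Real.cos_eq_cos_iff] at hEq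
    simp only [hMfold] at hEq
    have h1 : (d : ℤ) * M m + r m = m * k := by exact_mod_cast hdm m
    have h2' : (d : ℤ) * M n + r n = n * k := by exact_mod_cast hdm n
    have hrn := hrlt n; have hrm := hrlt m
    obtain ⟨t, ht | ht⟩ := hEq
    · -- M n = t*k + M m
      have h2 : ((t * k + M m : ℤ) : ℝ) * (2 * π / k) = 2 * t * π + (M m : ℝ) * (2 * π / k) := by
        push_cast
        field_simp
      have hMn : (M n : ℤ) = t * k + M m := by
        have := mul_right_cancel₀ h2πk (ht.trans h2.symm)
        exact_mod_cast this
      have hdvdr : (k : ℤ) ∣ (r n : ℤ) - r m := by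
        have hx : (r n : ℤ) - r m = (n - m) * k - d * ((M n : ℤ) - M m) := by
          linarith [h1, h2']
        rw [hx]
        have hMd : (k : ℤ) ∣ (M n : ℤ) - M m := ⟨t, by linarith⟩
        exact dvd_sub ⟨(n : ℤ) - m, by ring⟩ (hMd.mul_left _)
      have hz : (r n : ℤ) - r m = 0 :=
        Int.eq_zero_of_abs_lt_dvd hdvdr (by rw [abs_lt]; omega)
      exact hne (hrinj m hm n hn (by omega))
    · -- M n + M m = t*k
      have h2 : ((t * k - M m : ℤ) : ℝ) * (2 * π / k) = 2 * t * π - (M m : ℝ) * (2 * π / k) := by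
        push_cast
        field_simp
      have hMn : (M n : ℤ) = t * k - M m := by
        have := mul_right_cancel₀ h2πk (ht.trans h2.symm)
        exact_mod_cast this
      have hdvdr : (k : ℤ) ∣ (r n : ℤ) + r m := by
        have hx : (r n : ℤ) + r m = (n + m) * k - d * ((M n : ℤ) + M m) := by
          linarith [h1, h2']
        rw [hx]
        have hMd : (k : ℤ) ∣ (M n : ℤ) + M m := ⟨t, by linarith⟩
        exact dvd_sub ⟨(n : ℤ) + m, by ring⟩ (hMd.mul_left _)
      have hz : (r n : ℤ) + r m = 0 :=
        Int.eq_zero_of_abs_lt_dvd hdvdr (by rw [abs_lt]; omega)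
      have hr0 : r 0 = 0 := by simp [hr]
      have hn0 : n = 0 := hrinj n hn 0 (by omega) (by omega)
      have hm0 : m = 0 := hrinj m hm 0 (by omega) (by omega)
      exact hne (hm0.trans hn0.symm)
  -- the Chebyshev evaluation matrix
  let Cm : Matrix (Fin d) (Fin d) ℝ :=
    Matrix.of fun ℓ m => (Polynomial.Chebyshev.T ℝ ((ℓ : ℕ) : ℤ)).eval (a m)
  let Λ : Matrix (Fin d) (Fin d) ℝ := Matrix.of fun n ℓ => lam n ℓ
  -- entries of Cm are cosines
  have hCm : ∀ (j : ℕ) (m : Fin d),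
      (Polynomial.Chebyshev.T ℝ (j : ℤ)).eval (a m) = Real.cos ((j * M m : ℕ) * (2 * π / k)) := by
    intro j m
    rw [ha, Polynomial.Chebyshev.T_real_cos]
    congr 1
    push_cast
    ring
  -- the key symmetry
  have hsym : ∀ p m : Fin d, Cm (e p) m = Cm (e m) p := by
    intro p m
    show (Polynomial.Chebyshev.T ℝ ((r p : ℕ) : ℤ)).eval (a m)
        = (Polynomial.Chebyshev.T ℝ ((r m : ℕ) : ℤ)).eval (a p)
    rw [hCm, hCm]
    exact hcos _ _ (by push_cast; exact_mod_cast hdvd p m)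
  -- Lagrange: Λ * Cm = 1
  have hΛC : Λ * Cm = 1 := by
    ext n m
    have h := hlam (n : ℕ) (Finset.mem_range.mpr n.isLt)
    have h' := congrArg (Polynomial.eval (a m)) h
    rw [Polynomial.eval_prod, Polynomial.eval_finset_sum] at h'
    simp only [Polynomial.eval_mul, Polynomial.eval_C, Polynomial.eval_sub,
      Polynomial.eval_X] at h'
    have hRHS : (∑ ℓ ∈ Finset.range d,
        lam n ℓ * (Polynomial.Chebyshev.T ℝ (ℓ : ℤ)).eval (a m)) = (Λ * Cm) n m := by
      rw [Matrix.mul_apply]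
      exact (Fin.sum_univ_eq_sum_range
        (fun ℓ => lam n ℓ * (Polynomial.Chebyshev.T ℝ (ℓ : ℤ)).eval (a m)) d).symm
    rw [h'.symm] at hRHS
    rw [← hRHS]
    by_cases hmn : (m : Fin d) = n
    · subst hmn
      rw [Matrix.one_apply_eq]
      apply Finset.prod_eq_one
      intro s hs
      rw [Finset.mem_erase, Finset.mem_range] at hs
      exact inv_mul_cancel₀ (sub_ne_zero_of_ne (hane _ m.isLt _ hs.2 (Ne.symm hs.1)))
    · rw [Matrix.one_apply_ne (Ne.symm hmn)]
      apply Finset.prod_eq_zero (i := (m : ℕ))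
      · rw [Finset.mem_erase, Finset.mem_range]
        exact ⟨fun hc => hmn (Fin.val_injective hc), m.isLt⟩
      · simp
  have hCΛ : Cm * Λ = 1 := mul_eq_one_comm.mp hΛC
  -- the shuffled matrix also inverts Cm
  let Λ' : Matrix (Fin d) (Fin d) ℝ := Matrix.of fun n ℓ => Λ (e.symm ℓ) (e n)
  have hΛ'C : Λ' * Cm = 1 := by
    ext n m
    rw [Matrix.mul_apply]
    have step : ∑ ℓ : Fin d, Λ' n ℓ * Cm ℓ m
        = ∑ p : Fin d, Λ' n (e p) * Cm (e p) m :=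
      (Equiv.sum_comp e (fun ℓ => Λ' n ℓ * Cm ℓ m)).symm
    rw [step]
    have : ∀ p : Fin d, Λ' n (e p) * Cm (e p) m = Cm (e m) p * Λ p (e n) := by
      intro p
      show Λ (e.symm (e p)) (e n) * Cm (e p) m = Cm (e m) p * Λ p (e n)
      rw [e.symm_apply_apply, hsym, mul_comm]
    rw [Finset.sum_congr rfl (fun p _ => this p), ← Matrix.mul_apply, hCΛ]
    by_cases hmn : n = m
    · subst hmn; simp
    · rw [Matrix.one_apply_ne (fun hc => hmn (e.injective hc).symm),
        Matrix.one_apply_ne hmn]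
  have hΛ'Λ : Λ' = Λ := by
    calc Λ' = Λ' * (Cm * Λ) := by rw [hCΛ, Matrix.mul_one]
    _ = (Λ' * Cm) * Λ := by rw [Matrix.mul_assoc]
    _ = Λ := by rw [hΛ'C, Matrix.one_mul]
  refine ⟨e, fun n => ?_⟩
  have hfin := congrFun (congrFun hΛ'Λ n) 0
  have hsymm0 : e.symm 0 = 0 := by rw [Equiv.symm_apply_eq, he0]
  show lam (n : ℕ) ((0 : Fin d) : ℕ) = lam ((0 : Fin d) : ℕ) (e n)
  have : Λ (e.symm 0) (e n) = Λ n 0 := hfin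
  rw [hsymm0] at this
  exact this.symm
end
end

section
/- Let d ≥ 2 and k ≥ 2d be integers with gcd(k,d) = 1, let a_n = cos(⌊nk/d⌋·2π/k) for 0 ≤ n ≤ d−1, and let L_0(y) = ∏_{s=1}^{d−1} (y − a_s)/(1 − a_s). Then L_0(1) = 1, and for every integer j with 1 ≤ j ≤ ⌊k/2⌋ one has L_0(cos(2jπ/k)) ≥ 0. -/
open Real Polynomial Finset

noncomputable section

/-- For consecutive integers `t`, `t+1`, the product `sin (tπ/k) * sin ((t+1)π/k)`
is nonnegative. -/
lemma sinlem (k : ℕ) (hk : 0 < k) (t : ℤ) :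
    0 ≤ Real.sin (t * π / k) * Real.sin ((t + 1) * π / k) := by
  have hk0 : (k : ℝ) ≠ 0 := by positivity
  have hkpos : (0:ℝ) < k := by positivity
  set q : ℤ := t / (2 * k) with hq
  set r : ℤ := t % (2 * k) with hrdef
  have h2k : (0:ℤ) < 2 * k := by positivity
  have hr0 : 0 ≤ r := Int.emod_nonneg t (by omega)
  have hr1 : r < 2 * k := Int.emod_lt_of_pos t h2k
  have ht : t = 2 * k * q + r := by rw [hq, hrdef]; exact (Int.mul_ediv_add_emod t (2*k)).symm
  have e1 : (t:ℝ) * π / k = (r:ℝ) * π / k + q * (2 * π) := by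
    have : (t:ℝ) = 2 * k * q + r := by exact_mod_cast congrArg (Int.cast : ℤ → ℝ) ht
    rw [this]; field_simp; ring
  have e2 : ((t:ℝ) + 1) * π / k = ((r:ℝ) + 1) * π / k + q * (2 * π) := by
    have : (t:ℝ) = 2 * k * q + r := by exact_mod_cast congrArg (Int.cast : ℤ → ℝ) ht
    rw [this]; field_simp; ring
  rw [e1, e2, Real.sin_add_int_mul_two_pi, Real.sin_add_int_mul_two_pi]
  have hr0' : (0:ℝ) ≤ r := by exact_mod_cast hr0
  rcases le_or_gt (r + 1) k with h | h
  · have hrk : (r:ℝ) + 1 ≤ k := by exact_mod_cast h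
    apply mul_nonneg <;> apply Real.sin_nonneg_of_nonneg_of_le_pi
    · positivity
    · rw [div_le_iff₀ hkpos]; nlinarith [pi_pos]
    · positivity
    · rw [div_le_iff₀ hkpos]; nlinarith [pi_pos]
  · have hkr : (k:ℝ) ≤ r := by
      have : (k:ℤ) ≤ r := by omega
      exact_mod_cast this
    have hrk2 : (r:ℝ) + 1 ≤ 2 * k := by
      have : r + 1 ≤ 2 * (k:ℤ) := by omega
      exact_mod_cast this
    have f1 : (r:ℝ) * π / k = ((r:ℝ) - k) * π / k + π := by field_simp; ring
    have f2 : ((r:ℝ) + 1) * π / k = ((r:ℝ) + 1 - k) * π / k + π := by field_simp; ring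
    rw [f1, f2, Real.sin_add_pi, Real.sin_add_pi, neg_mul_neg]
    apply mul_nonneg <;> apply Real.sin_nonneg_of_nonneg_of_le_pi
    · have : (0:ℝ) ≤ (r:ℝ) - k := by linarith
      positivity
    · rw [div_le_iff₀ hkpos]; nlinarith [pi_pos]
    · have : (0:ℝ) ≤ (r:ℝ) + 1 - k := by linarith
      positivity
    · rw [div_le_iff₀ hkpos]; nlinarith [pi_pos]

/-- The product `(cos(2jπ/k) - cos(2mπ/k)) * (cos(2jπ/k) - cos(2(m+1)π/k))` is
nonnegative for integers `j, m`. -/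
lemma paircos (k : ℕ) (hk : 0 < k) (j m : ℕ) :
    0 ≤ (Real.cos (2 * j * π / k) - Real.cos ((m : ℝ) * (2 * π / k))) *
      (Real.cos (2 * j * π / k) - Real.cos (((m : ℝ) + 1) * (2 * π / k))) := by
  have hk0 : (k : ℝ) ≠ 0 := by positivity
  have a1 : (2 * (j:ℝ) * π / k + (m:ℝ) * (2 * π / k)) / 2 = ((j:ℝ) + m) * π / k := by
    field_simp
  have a2 : (2 * (j:ℝ) * π / k - (m:ℝ) * (2 * π / k)) / 2 = ((j:ℝ) - m - 1 + 1) * π / k := by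
    field_simp; ring
  have a3 : (2 * (j:ℝ) * π / k + ((m:ℝ) + 1) * (2 * π / k)) / 2 = ((j:ℝ) + m + 1) * π / k := by
    field_simp; ring
  have a4 : (2 * (j:ℝ) * π / k - ((m:ℝ) + 1) * (2 * π / k)) / 2 = ((j:ℝ) - m - 1) * π / k := by
    field_simp; ring
  rw [Real.cos_sub_cos, Real.cos_sub_cos, a1, a2, a3, a4]
  have h1 := sinlem k hk ((j:ℤ) + m)
  have e1 : (((j:ℤ) + (m:ℤ) : ℤ) : ℝ) = (j:ℝ) + m := by push_cast; ring
  rw [e1] at h1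
  have h2 := sinlem k hk ((j:ℤ) - m - 1)
  have e2 : (((j:ℤ) - (m:ℤ) - 1 : ℤ) : ℝ) = (j:ℝ) - m - 1 := by push_cast; ring
  rw [e2] at h2
  nlinarith [mul_nonneg h1 h2]

/-- When `k = 2m+1` is odd, `cos(2jπ/k) ≥ cos(2mπ/k)` for all integers `j`. -/
lemma middlecos (k : ℕ) (hk : 0 < k) (j m : ℕ) (hkm : 2 * m + 1 = k) :
    0 ≤ Real.cos (2 * j * π / k) - Real.cos ((m : ℝ) * (2 * π / k)) := by
  have hk0 : (k : ℝ) ≠ 0 := by positivity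
  have hkR : (k : ℝ) = 2 * m + 1 := by exact_mod_cast hkm.symm
  have hm0 : (2 * (m:ℝ) + 1) ≠ 0 := by positivity
  have a1 : (2 * (j:ℝ) * π / k + (m:ℝ) * (2 * π / k)) / 2 = ((j:ℝ) + m) * π / k := by
    field_simp
  have a2 : (2 * (j:ℝ) * π / k - (m:ℝ) * (2 * π / k)) / 2 = ((j:ℝ) + m + 1) * π / k - π := by
    rw [hkR]; field_simp; ring
  rw [Real.cos_sub_cos, a1, a2, Real.sin_sub_pi]
  have h1 := sinlem k hk ((j:ℤ) + m)
  have e1 : (((j:ℤ) + (m:ℤ) : ℤ) : ℝ) = (j:ℝ) + m := by push_cast; ring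
  rw [e1] at h1
  nlinarith [h1]

/-- `cos (q·2π/k) < 1` when `1 ≤ q ≤ k-1`. -/
lemma coslt (k : ℕ) (hk4 : 4 ≤ k) (q : ℕ) (h1 : 1 ≤ q) (h2 : q + 1 ≤ k) :
    Real.cos ((q : ℝ) * (2 * π / k)) < 1 := by
  have hkpos : (0:ℝ) < k := by positivity
  have hq1 : (1:ℝ) ≤ q := by exact_mod_cast h1
  have hqk : (q:ℝ) + 1 ≤ k := by exact_mod_cast h2
  set x := (q : ℝ) * (2 * π / k) with hx
  have hxpos : 0 < x := by
    have : (0:ℝ) < q := by linarith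
    positivity
  have hxlt : x < 2 * π := by
    rw [hx]
    have e : (q:ℝ) * (2 * π / k) = (q:ℝ) * (2 * π) / k := by ring
    rw [e, div_lt_iff₀ hkpos]
    nlinarith [pi_pos]
  refine lt_of_le_of_ne (Real.cos_le_one x) ?_
  rw [Ne, Real.cos_eq_one_iff_of_lt_of_lt (by linarith) hxlt]
  intro h; linarith

/-- Floor division facts used to pair up `s` with `d - s`. -/
lemma floor_pair (k d s : ℕ) (hd : 2 ≤ d) (hk : 2 * d ≤ k) (hcop : Nat.Coprime k d)
    (hs1 : 1 ≤ s) (hs2 : s < d) :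
    1 ≤ s * k / d ∧ s * k / d + 1 ≤ k ∧ s * k / d + (d - s) * k / d + 1 = k := by
  have hd0 : 0 < d := by omega
  obtain ⟨q, r, q', r', hq, hr, hq', hr'⟩ :
      ∃ q r q' r', q = s * k / d ∧ r = s * k % d ∧ q' = (d - s) * k / d ∧ r' = (d - s) * k % d :=
    ⟨_, _, _, _, rfl, rfl, rfl, rfl⟩
  rw [← hq, ← hq']
  have e1 : d * q + r = s * k := by rw [hq, hr]; exact Nat.div_add_mod (s * k) d
  have e2 : d * q' + r' = (d - s) * k := by rw [hq', hr']; exact Nat.div_add_mod ((d - s) * k) d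
  have hrd : r < d := by rw [hr]; exact Nat.mod_lt _ hd0
  have hrd' : r' < d := by rw [hr']; exact Nat.mod_lt _ hd0
  have hrpos : 0 < r := by
    rcases Nat.eq_zero_or_pos r with h | h
    · exfalso
      rw [hr] at h
      have hdvd : d ∣ s * k := Nat.dvd_of_mod_eq_zero h
      have : d ∣ s := (Nat.Coprime.dvd_of_dvd_mul_right (hcop.symm) hdvd)
      have := Nat.le_of_dvd (by omega) this
      omega
    · exact h
  have hrpos' : 0 < r' := by
    rcases Nat.eq_zero_or_pos r' with h | h
    · exfalso
      rw [hr'] at h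
      have hdvd : d ∣ (d - s) * k := Nat.dvd_of_mod_eq_zero h
      have : d ∣ (d - s) := (Nat.Coprime.dvd_of_dvd_mul_right (hcop.symm) hdvd)
      have := Nat.le_of_dvd (by omega) this
      omega
    · exact h
  have hq1 : 1 ≤ q := by
    rw [hq, Nat.one_le_div_iff hd0]
    calc d ≤ k := by omega
    _ ≤ s * k := Nat.le_mul_of_pos_left k hs1
  have e1' : (d:ℤ) * q + r = s * k := by exact_mod_cast e1
  have e2' : (d:ℤ) * q' + r' = ((d:ℤ) - s) * k := by
    have : ((d - s : ℕ) : ℤ) = (d:ℤ) - s := by omega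
    rw [← this]; exact_mod_cast e2
  have key : (d:ℤ) * ((q:ℤ) + q' + 1 - k) = (d:ℤ) - r - r' := by
    linear_combination e1' + e2'
  have hr1 : (1:ℤ) ≤ r := by exact_mod_cast hrpos
  have hr2 : (r:ℤ) < d := by exact_mod_cast hrd
  have hr1' : (1:ℤ) ≤ r' := by exact_mod_cast hrpos'
  have hr2' : (r':ℤ) < d := by exact_mod_cast hrd'
  have hd2 : (2:ℤ) ≤ d := by exact_mod_cast hd
  have hX1 : (q:ℤ) + q' + 1 - k < 1 := by nlinarith [key]
  have hX2 : (-1:ℤ) < (q:ℤ) + q' + 1 - k := by nlinarith [key]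
  exact ⟨hq1, by omega, by omega⟩

/-- A product over `Icc 1 (d-1)` is nonnegative provided the paired factors
`g s * g (d - s)` are nonnegative and the middle factor (if any) is nonnegative. -/
lemma prod_nonneg_of_pairs (d : ℕ) (g : ℕ → ℝ)
    (h1 : ∀ s, 1 ≤ s → 2 * s < d → 0 ≤ g s * g (d - s))
    (h2 : ∀ s, 2 * s = d → 0 ≤ g s) :
    0 ≤ ∏ s ∈ Finset.Icc 1 (d - 1), g s := by
  classical
  set S := Finset.Icc 1 (d - 1) with hS
  set A := S.filter (fun s => 2 * s < d) with hA
  set B := S.filter (fun s => 2 * s = d) with hB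
  set C := S.filter (fun s => d < 2 * s) with hC
  have hU : S = (A ∪ B) ∪ C := by
    ext s
    simp only [hA, hB, hC, Finset.mem_union, Finset.mem_filter, hS, Finset.mem_Icc]
    omega
  have hd1 : Disjoint A B := by
    rw [Finset.disjoint_left]
    intro s hsA hsB
    simp only [hA, hB, Finset.mem_filter] at hsA hsB
    omega
  have hd2 : Disjoint (A ∪ B) C := by
    rw [Finset.disjoint_left]
    intro s hsAB hsC
    simp only [hA, hB, hC, Finset.mem_union, Finset.mem_filter] at hsAB hsC
    omega
  rw [hU, Finset.prod_union hd2, Finset.prod_union hd1]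
  have hCA : ∏ s ∈ C, g s = ∏ s ∈ A, g (d - s) := by
    apply Finset.prod_nbij' (fun s => d - s) (fun s => d - s)
    · intro a haC
      simp only [hA, hC, Finset.mem_filter, hS, Finset.mem_Icc] at *
      omega
    · intro a haA
      simp only [hA, hC, Finset.mem_filter, hS, Finset.mem_Icc] at *
      omega
    · intro a haC
      simp only [hC, Finset.mem_filter, hS, Finset.mem_Icc] at haC
      omega
    · intro a haA
      simp only [hA, Finset.mem_filter, hS, Finset.mem_Icc] at haA
      omega
    · intro a haC
      simp only [hC, Finset.mem_filter, hS, Finset.mem_Icc] at haC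
      congr 1
      omega
  rw [hCA, mul_right_comm, ← Finset.prod_mul_distrib]
  apply mul_nonneg
  · apply Finset.prod_nonneg
    intro s hs
    simp only [hA, Finset.mem_filter, hS, Finset.mem_Icc] at hs
    exact h1 s hs.1.1 hs.2
  · apply Finset.prod_nonneg
    intro s hs
    simp only [hB, Finset.mem_filter, hS, Finset.mem_Icc] at hs
    exact h2 s hs.2

/-- The Lagrange polynomial `L_0` satisfies `L_0(1) = 1` and is nonnegative at the points
`cos(2jπ/k)` for `1 ≤ j ≤ ⌊k/2⌋`. -/
theorem L0_nonneg_at_cos (k d : ℕ) (hd : 2 ≤ d) (hk : 2 * d ≤ k)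
    (hcop : Nat.Coprime k d) (a : ℕ → ℝ)
    (ha : ∀ n, a n = Real.cos ((↑(n * k / d) : ℝ) * (2 * Real.pi / k)))
    (L0 : ℝ → ℝ)
    (hL0 : ∀ y, L0 y = ∏ s ∈ Finset.Icc 1 (d - 1), ((y - a s) / (1 - a s))) :
    L0 1 = 1 ∧ ∀ j : ℕ, 1 ≤ j → j ≤ k / 2 →
      0 ≤ L0 (Real.cos (2 * j * Real.pi / k)) := by
  have hk4 : 4 ≤ k := by omega
  have hk0 : 0 < k := by omega
  have hden : ∀ s, 1 ≤ s → s ≤ d - 1 → a s < 1 := by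
    intro s hs1 hs2
    have hsd : s < d := by omega
    obtain ⟨hq1, hq2, hsum⟩ := floor_pair k d s hd hk hcop hs1 hsd
    rw [ha s]
    exact coslt k hk4 (s * k / d) hq1 hq2
  constructor
  · rw [hL0]
    apply Finset.prod_eq_one
    intro s hs
    rw [Finset.mem_Icc] at hs
    have h := hden s hs.1 hs.2
    exact div_self (ne_of_gt (by linarith : (0:ℝ) < 1 - a s))
  · intro j hj1 hj2
    rw [hL0]
    apply prod_nonneg_of_pairs
    · -- paired factors
      intro s hs1 hs2
      have hsd : s < d := by omega
      obtain ⟨hq1, hq2, hsum⟩ := floor_pair k d s hd hk hcop hs1 hsd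
      set q := s * k / d with hqdef
      set q' := (d - s) * k / d with hq'def
      have ha1 : a s < 1 := hden s hs1 (by omega)
      have ha2 : a (d - s) < 1 := hden (d - s) (by omega) (by omega)
      have hq'eq : ((q' : ℕ) : ℝ) = (k:ℝ) - 1 - q := by
        have hsum2 : q' + q + 1 = k := by omega
        have := congrArg (Nat.cast : ℕ → ℝ) hsum2
        push_cast at this
        linarith
      have hcosd : a (d - s) = Real.cos (((q:ℝ) + 1) * (2 * π / k)) := by
        rw [ha (d - s)]
        have hk0' : (k:ℝ) ≠ 0 := by positivity
        have hang : ((q' : ℕ) : ℝ) * (2 * π / k) = 2 * π - ((q:ℝ) + 1) * (2 * π / k) := by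
          rw [hq'eq]; field_simp; ring
        rw [hang, Real.cos_two_pi_sub]
      rw [div_mul_div_comm]
      apply div_nonneg
      · rw [ha s, hcosd]
        exact paircos k hk0 j q
      · have h1 : (0:ℝ) ≤ 1 - a s := by linarith
        have h2 : (0:ℝ) ≤ 1 - a (d - s) := by linarith
        exact mul_nonneg h1 h2
    · -- middle factor
      intro s hs
      have hs1 : 1 ≤ s := by omega
      have hmd : s * k / d = k / 2 := by
        rw [← hs, mul_comm 2 s]
        exact Nat.mul_div_mul_left k 2 (by omega)
      have hkodd : k % 2 = 1 := by
        rcases Nat.even_or_odd k with he | ho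
        · exfalso
          have h2k : 2 ∣ k := he.two_dvd
          have h2d : 2 ∣ d := ⟨s, hs.symm⟩
          have hg : 2 ∣ Nat.gcd k d := Nat.dvd_gcd h2k h2d
          rw [hcop] at hg
          omega
        · exact Nat.odd_iff.mp ho
      have hm : 2 * (k / 2) + 1 = k := by omega
      have ha1 : a s < 1 := hden s hs1 (by omega)
      have hden2 : (0:ℝ) ≤ 1 - a s := by linarith
      rw [ha s, hmd] at hden2 ⊢
      exact div_nonneg (middlecos k hk0 j (k / 2) hm) hden2
end
end

section
/- Let d ≥ 2 be an integer and set c_i = cos(2iπ/d) for 0 ≤ i ≤ d−1 and σ_j = sin(2jπ/d). Then for every integer j with 1 ≤ j ≤ d−1: if 2j ≠ d, then ∏_{i=0, i ≠ j, i ≠ d−j}^{d−1} (c_j − c_i) = −d² / (2^d · σ_j²); and if 2j = d, then ∏_{i=0, i ≠ j}^{d−1} (c_j − c_i) = −d² / 2^{d−1}. -/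
open Real Finset

open Polynomial in
lemma aux_prod_eval {d : ℕ} (hd : d ≠ 0) {ω : ℂ} (hprim : IsPrimitiveRoot ω d) (x : ℂ) :
    ∏ i ∈ Finset.range d, (x - ω ^ i) = x ^ d - 1 := by
  have h := X_pow_sub_C_eq_prod hprim (Nat.pos_of_ne_zero hd) (one_pow d)
  have h2 := congrArg (Polynomial.eval x) h
  simp only [Polynomial.eval_sub, Polynomial.eval_pow, Polynomial.eval_X, Polynomial.eval_C,
    Polynomial.eval_prod, mul_one, map_one, Polynomial.eval_one] at h2
  exact h2.symm

open Polynomial in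
lemma aux_prod_erase {d : ℕ} (hd : d ≠ 0) {ω : ℂ} (hprim : IsPrimitiveRoot ω d)
    {k : ℕ} (hk : k < d) :
    ∏ i ∈ (Finset.range d).erase k, (ω ^ k - ω ^ i) = d * (ω ^ k) ^ (d - 1) := by
  have hP : (X ^ d - C 1 : ℂ[X]) = ∏ i ∈ Finset.range d, (X - C (ω ^ i)) := by
    simpa using X_pow_sub_C_eq_prod hprim (Nat.pos_of_ne_zero hd) (one_pow d)
  have hωk : (ω ^ k) ^ d = 1 := by
    rw [← pow_mul, mul_comm, pow_mul, hprim.pow_eq_one, one_pow]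
  have h1 : (X - C (ω ^ k)) * ∏ i ∈ (Finset.range d).erase k, (X - C (ω ^ i)) =
      X ^ d - C 1 := by
    exact (Finset.mul_prod_erase _ _ (Finset.mem_range.mpr hk)).trans hP.symm
  have h2 : (X - C (ω ^ k)) * (∑ m ∈ Finset.range d, X ^ m * C (ω ^ k) ^ (d - 1 - m)) =
      X ^ d - C 1 := by
    have hg := geom_sum₂_mul (X : ℂ[X]) (C (ω ^ k)) d
    rw [mul_comm] at hg
    rw [hg, ← C_pow, hωk]
  have hcancel := mul_left_cancel₀ (X_sub_C_ne_zero (ω ^ k)) (h1.trans h2.symm)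
  have h3 := congrArg (Polynomial.eval (ω ^ k)) hcancel
  simp only [Polynomial.eval_prod, Polynomial.eval_finset_sum, Polynomial.eval_mul,
    Polynomial.eval_pow, Polynomial.eval_X, Polynomial.eval_C, Polynomial.eval_sub] at h3
  rw [h3]
  have h4 : ∀ m ∈ Finset.range d, (ω ^ k) ^ m * ((ω ^ k) ^ (d - 1 - m)) ^ 1 =
      (ω ^ k) ^ (d - 1) := by
    intro m hm
    rw [pow_one, ← pow_add]
    congr 1
    have := Finset.mem_range.mp hm
    omega
  calc ∑ m ∈ Finset.range d, (ω ^ k) ^ m * (ω ^ k) ^ (d - 1 - m)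
      = ∑ m ∈ Finset.range d, (ω ^ k) ^ (d - 1) := by
        apply Finset.sum_congr rfl
        intro m hm
        have := h4 m hm
        simpa using this
    _ = d * (ω ^ k) ^ (d - 1) := by
        rw [Finset.sum_const, Finset.card_range, nsmul_eq_mul]

/-- Products of differences of the cosines `c_i = cos(2iπ/d)`. -/
theorem prod_cos_diff (d : ℕ) (hd : 2 ≤ d) (c σ : ℕ → ℝ)
    (hc : ∀ i, c i = Real.cos (2 * i * Real.pi / d))
    (hσ : ∀ j, σ j = Real.sin (2 * j * Real.pi / d)) :
    ∀ j : ℕ, 1 ≤ j → j ≤ d - 1 →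
      (2 * j ≠ d →
        ∏ i ∈ ((Finset.range d).erase j).erase (d - j), (c j - c i) =
          -(d : ℝ) ^ 2 / (2 ^ d * (σ j) ^ 2)) ∧
      (2 * j = d →
        ∏ i ∈ (Finset.range d).erase j, (c j - c i) =
          -(d : ℝ) ^ 2 / 2 ^ (d - 1)) := by
  intro j hj1 hj2
  have hd0 : d ≠ 0 := by omega
  set ω : ℂ := Complex.exp (2 * Real.pi * Complex.I / d) with hω
  have hprim : IsPrimitiveRoot ω d := Complex.isPrimitiveRoot_exp d hd0
  have hω0 : ω ≠ 0 := Complex.exp_ne_zero _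
  have hjlt : j < d := by omega
  have hexp : ∀ i : ℕ, ω ^ i = Complex.exp (((2 * i * Real.pi / d : ℝ) : ℂ) * Complex.I) := by
    intro i
    rw [hω, ← Complex.exp_nat_mul]
    congr 1
    push_cast
    ring
  have hcC : ∀ i : ℕ, ((c i : ℝ) : ℂ) = (ω ^ i + (ω ^ i)⁻¹) / 2 := by
    intro i
    rw [hc i, Complex.ofReal_cos, hexp i, ← Complex.exp_neg, ← neg_mul,
      Complex.exp_mul_I, Complex.exp_mul_I, Complex.cos_neg, Complex.sin_neg]
    push_cast
    ring
  have hσC : ω ^ j - (ω ^ j)⁻¹ = 2 * ((σ j : ℝ) : ℂ) * Complex.I := by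
    rw [hσ j, Complex.ofReal_sin, hexp j, ← Complex.exp_neg, ← neg_mul,
      Complex.exp_mul_I, Complex.exp_mul_I, Complex.cos_neg, Complex.sin_neg]
    push_cast
    ring
  have hzd : ω ^ j * ω ^ (d - j) = 1 := by
    rw [← pow_add, show j + (d - j) = d by omega]
    exact hprim.pow_eq_one
  have hwinv : ω ^ (d - j) = (ω ^ j)⁻¹ := eq_inv_of_mul_eq_one_left (by rw [mul_comm]; exact hzd)
  have hz0 : ω ^ j ≠ 0 := pow_ne_zero _ hω0
  have hfac : ∀ i : ℕ, ((c j : ℝ) : ℂ) - ((c i : ℝ) : ℂ) =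
      (-1) * ((ω ^ j - ω ^ i) * (ω ^ (d - j) - ω ^ i)) / (2 * ω ^ i) := by
    intro i
    rw [hcC, hcC, hwinv]
    have hu : ω ^ i ≠ 0 := pow_ne_zero _ hω0
    field_simp
    ring
  have hprodall : ∏ i ∈ Finset.range d, ω ^ i = (-1 : ℂ) ^ (d + 1) := by
    have h0 := aux_prod_eval hd0 hprim 0
    rw [zero_pow hd0] at h0
    have hrw : ∏ i ∈ Finset.range d, ((0 : ℂ) - ω ^ i) =
        (-1 : ℂ) ^ d * ∏ i ∈ Finset.range d, ω ^ i := by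
      rw [show (∏ i ∈ Finset.range d, ((0 : ℂ) - ω ^ i)) =
          ∏ i ∈ Finset.range d, ((-1 : ℂ) * ω ^ i) from
        Finset.prod_congr rfl (fun i _ => by ring),
        Finset.prod_mul_distrib, Finset.prod_const, Finset.card_range]
    rw [hrw] at h0
    have hsq : ((-1 : ℂ) ^ d) * ((-1 : ℂ) ^ d) = 1 := by
      rw [← pow_add, ← two_mul, pow_mul]
      norm_num
    calc ∏ i ∈ Finset.range d, ω ^ i
        = ((-1 : ℂ) ^ d * (-1 : ℂ) ^ d) * ∏ i ∈ Finset.range d, ω ^ i := by rw [hsq, one_mul]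
      _ = (-1 : ℂ) ^ d * ((-1 : ℂ) ^ d * ∏ i ∈ Finset.range d, ω ^ i) := by ring
      _ = (-1 : ℂ) ^ d * (0 - 1) := by rw [h0]
      _ = (-1 : ℂ) ^ (d + 1) := by rw [pow_succ]; ring
  constructor
  · intro hjd
    have hdjlt : d - j < d := by omega
    have hdjne : d - j ≠ j := by omega
    have hzw : ω ^ j ≠ ω ^ (d - j) := by
      intro h
      have := hprim.pow_inj hjlt hdjlt h
      omega
    have hzw0 : ω ^ j - ω ^ (d - j) ≠ 0 := sub_ne_zero.mpr hzw
    have hwz0 : ω ^ (d - j) - ω ^ j ≠ 0 := sub_ne_zero.mpr (Ne.symm hzw)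
    have hσ0 : ((σ j : ℝ) : ℂ) ≠ 0 := by
      intro h
      apply hzw0
      rw [hwinv, hσC, h]
      ring
    have hmemj : j ∈ Finset.range d := Finset.mem_range.mpr hjlt
    have hmemdj : d - j ∈ (Finset.range d).erase j :=
      Finset.mem_erase.mpr ⟨hdjne, Finset.mem_range.mpr hdjlt⟩
    have hmemj' : j ∈ (Finset.range d).erase (d - j) :=
      Finset.mem_erase.mpr ⟨Ne.symm hdjne, hmemj⟩
    set S := ((Finset.range d).erase j).erase (d - j) with hS
    have hSc : S = ((Finset.range d).erase (d - j)).erase j := by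
      rw [hS, Finset.erase_right_comm]
    have hP1 : (ω ^ j - ω ^ (d - j)) * ∏ i ∈ S, (ω ^ j - ω ^ i) = d * (ω ^ j) ^ (d - 1) :=
      (Finset.mul_prod_erase _ (fun i => ω ^ j - ω ^ i) hmemdj).trans
        (aux_prod_erase hd0 hprim hjlt)
    have hP2 : (ω ^ (d - j) - ω ^ j) * ∏ i ∈ S, (ω ^ (d - j) - ω ^ i) =
        d * (ω ^ (d - j)) ^ (d - 1) := by
      rw [hSc]
      exact (Finset.mul_prod_erase _ (fun i => ω ^ (d - j) - ω ^ i) hmemj').trans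
        (aux_prod_erase hd0 hprim hdjlt)
    have hP3 : ∏ i ∈ S, ω ^ i = (-1 : ℂ) ^ (d + 1) := by
      have h1 : ω ^ (d - j) * ∏ i ∈ S, ω ^ i = ∏ i ∈ (Finset.range d).erase j, ω ^ i :=
        Finset.mul_prod_erase _ (fun i => ω ^ i) hmemdj
      have h2 : ω ^ j * ∏ i ∈ (Finset.range d).erase j, ω ^ i = ∏ i ∈ Finset.range d, ω ^ i :=
        Finset.mul_prod_erase _ (fun i => ω ^ i) hmemj
      have h3 : ω ^ j * (ω ^ (d - j) * ∏ i ∈ S, ω ^ i) = (-1 : ℂ) ^ (d + 1) := by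
        rw [h1, h2, hprodall]
      rw [← mul_assoc, hzd, one_mul] at h3
      exact h3
    have hcard : S.card = d - 2 := by
      rw [hS, Finset.card_erase_of_mem hmemdj, Finset.card_erase_of_mem hmemj,
        Finset.card_range]
      omega
    have hpow : (ω ^ j) ^ (d - 1) * (ω ^ (d - j)) ^ (d - 1) = 1 := by
      rw [← mul_pow, hzd, one_pow]
    have hQQ : (∏ i ∈ S, (ω ^ j - ω ^ i)) * (∏ i ∈ S, (ω ^ (d - j) - ω ^ i)) *
        (ω ^ j - ω ^ (d - j)) ^ 2 = -(d : ℂ) ^ 2 := by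
      linear_combination ((∏ i ∈ S, (ω ^ (d - j) - ω ^ i)) * (ω ^ j - ω ^ (d - j))) * hP1 -
        ((d : ℂ) * (ω ^ j) ^ (d - 1)) * hP2 - (d : ℂ) ^ 2 * hpow
    have hσsq : ((σ j : ℝ) : ℂ) ^ 2 = -((ω ^ j - ω ^ (d - j)) ^ 2) / 4 := by
      rw [hwinv, hσC, mul_pow, mul_pow, Complex.I_sq]
      ring
    apply Complex.ofReal_inj.mp
    push_cast
    rw [Finset.prod_congr rfl (fun i (_ : i ∈ S) => hfac i)]
    rw [show (∏ i ∈ S, ((-1 : ℂ) * ((ω ^ j - ω ^ i) * (ω ^ (d - j) - ω ^ i)) / (2 * ω ^ i))) =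
        (∏ i ∈ S, (-1 : ℂ)) * ((∏ i ∈ S, (ω ^ j - ω ^ i)) *
          ∏ i ∈ S, (ω ^ (d - j) - ω ^ i)) / ((∏ i ∈ S, (2 : ℂ)) * ∏ i ∈ S, ω ^ i) from by
      rw [← Finset.prod_mul_distrib, ← Finset.prod_mul_distrib, ← Finset.prod_mul_distrib,
        ← Finset.prod_div_distrib]]
    rw [Finset.prod_const, Finset.prod_const, hcard, hP3, hσsq]
    obtain ⟨k, rfl⟩ : ∃ k, d = k + 2 := ⟨d - 2, by omega⟩
    rw [show k + 2 - 2 = k from rfl]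
    rw [div_eq_div_iff
      (mul_ne_zero (pow_ne_zero _ two_ne_zero)
        (pow_ne_zero _ (neg_ne_zero.mpr one_ne_zero)))
      (mul_ne_zero (pow_ne_zero _ two_ne_zero)
        (div_ne_zero (neg_ne_zero.mpr (pow_ne_zero _ hzw0)) (by norm_num)))]
    linear_combination (-((-1 : ℂ)) ^ k * 2 ^ k) * hQQ
  · intro hjd
    have hdj_eq : d - j = j := by omega
    have hde : Even d := ⟨j, by omega⟩
    have hdo : Odd (d - 1) := ⟨j - 1, by omega⟩
    have hz2 : ω ^ j * ω ^ j = 1 := by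
      rw [← pow_add, show j + j = d by omega]
      exact hprim.pow_eq_one
    have hz1 : ω ^ j ≠ 1 := by
      intro h
      have h0 : ω ^ j = ω ^ 0 := by rw [h, pow_zero]
      have := hprim.pow_inj hjlt (by omega) h0
      omega
    have hzneg : ω ^ j = -1 := by
      rcases mul_self_eq_one_iff.mp hz2 with h | h
      · exact absurd h hz1
      · exact h
    have hmemj : j ∈ Finset.range d := Finset.mem_range.mpr hjlt
    have hcard : ((Finset.range d).erase j).card = d - 1 := by
      rw [Finset.card_erase_of_mem hmemj, Finset.card_range]
    have hA : ∏ i ∈ (Finset.range d).erase j, (ω ^ j - ω ^ i) = d * (ω ^ j) ^ (d - 1) :=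
      aux_prod_erase hd0 hprim hjlt
    have hzd1 : (ω ^ j) ^ (d - 1) = -1 := by
      rw [hzneg]
      exact hdo.neg_one_pow
    have hP3 : ∏ i ∈ (Finset.range d).erase j, ω ^ i = 1 := by
      have hPe : ω ^ j * ∏ i ∈ (Finset.range d).erase j, ω ^ i = (-1 : ℂ) ^ (d + 1) :=
        (Finset.mul_prod_erase _ (fun i => ω ^ i) hmemj).trans hprodall
      rw [hzneg, pow_succ, hde.neg_one_pow, one_mul] at hPe
      linear_combination -hPe
    rw [hdj_eq] at hfac
    apply Complex.ofReal_inj.mp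
    push_cast
    rw [Finset.prod_congr rfl (fun i (_ : i ∈ (Finset.range d).erase j) => hfac i)]
    rw [show (∏ i ∈ (Finset.range d).erase j,
          ((-1 : ℂ) * ((ω ^ j - ω ^ i) * (ω ^ j - ω ^ i)) / (2 * ω ^ i))) =
        (∏ i ∈ (Finset.range d).erase j, (-1 : ℂ)) *
          ((∏ i ∈ (Finset.range d).erase j, (ω ^ j - ω ^ i)) *
            ∏ i ∈ (Finset.range d).erase j, (ω ^ j - ω ^ i)) /
          ((∏ i ∈ (Finset.range d).erase j, (2 : ℂ)) *
            ∏ i ∈ (Finset.range d).erase j, ω ^ i) from by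
      rw [← Finset.prod_mul_distrib, ← Finset.prod_mul_distrib, ← Finset.prod_mul_distrib,
        ← Finset.prod_div_distrib]]
    rw [Finset.prod_const, Finset.prod_const, hcard, hA, hP3, hzd1, hdo.neg_one_pow]
    ring
end

section
/- For every integer d ≥ 2, Σ_{i=1}^{d−1} 1/(1 − cos(2iπ/d)) = (d² − 1)/6. -/
open Real Finset

private lemma sum_mul_pow (z : ℂ) (n : ℕ) :
    (z - 1) * ∑ j ∈ range n, (j : ℂ) * z ^ j
      = n * z ^ n - (∑ j ∈ range n, z ^ j) - z ^ n + 1 := by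
  induction n with
  | zero => simp
  | succ n ih =>
    rw [Finset.sum_range_succ, Finset.sum_range_succ (f := fun j => z ^ j)]
    push_cast; ring_nf; ring_nf at ih; linear_combination ih

private lemma A_eq (d : ℕ) (z : ℂ) (hz : z ^ d = 1) (h1 : z ≠ 1) :
    ∑ j ∈ range d, (j : ℂ) * z ^ j = d / (z - 1) := by
  have hz1 : z - 1 ≠ 0 := sub_ne_zero.mpr h1
  have hgeom : ∑ j ∈ range d, z ^ j = 0 := by
    rw [geom_sum_eq h1, hz]; simp
  rw [eq_div_iff hz1, mul_comm, sum_mul_pow, hgeom, hz]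
  ring

private lemma sum_id_c (n : ℕ) : ∑ j ∈ range n, (j : ℂ) = n * (n - 1) / 2 := by
  induction n with
  | zero => simp
  | succ n ih => rw [Finset.sum_range_succ, ih]; push_cast; ring

private lemma sum_sq_c (n : ℕ) : ∑ j ∈ range n, (j : ℂ) ^ 2 = n * (n - 1) * (2 * n - 1) / 6 := by
  induction n with
  | zero => simp
  | succ n ih => rw [Finset.sum_range_succ, ih]; push_cast; ring

/-- `Σ_{i=1}^{d−1} 1/(1 − cos(2iπ/d)) = (d² − 1)/6`. -/
theorem sum_one_div_one_sub_cos (d : ℕ) (hd : 2 ≤ d) :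
    ∑ i ∈ Finset.Icc 1 (d - 1), 1 / (1 - Real.cos (2 * i * Real.pi / d)) =
      ((d : ℝ) ^ 2 - 1) / 6 := by
  have hdn : (d : ℕ) ≠ 0 := by omega
  have hd0 : (d : ℂ) ≠ 0 := Nat.cast_ne_zero.mpr hdn
  have hπ : (Real.pi : ℂ) ≠ 0 := Complex.ofReal_ne_zero.mpr Real.pi_ne_zero
  set ω : ℂ := Complex.exp (2 * Real.pi * Complex.I / d) with hω
  have hpow : ∀ m : ℕ, ω ^ m = Complex.exp (2 * Real.pi * m / d * Complex.I) := by
    intro m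
    rw [hω, ← Complex.exp_nat_mul]
    ring_nf
  -- ω^m = 1 ↔ d ∣ m
  have hone : ∀ m : ℕ, ω ^ m = 1 ↔ d ∣ m := by
    intro m
    rw [hpow m, Complex.exp_eq_one_iff]
    constructor
    · rintro ⟨n, hn⟩
      have hne : (2 : ℂ) * Real.pi * Complex.I ≠ 0 := by
        simp [hπ, Complex.I_ne_zero]
      have h2 : (m : ℂ) * (2 * Real.pi * Complex.I)
          = (n * d) * (2 * Real.pi * Complex.I) := by
        field_simp at hn
        linear_combination (2 * (Real.pi : ℂ) * Complex.I) * hn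
      have hmc : (m : ℂ) = n * d := mul_right_cancel₀ hne h2
      have hmz : (m : ℤ) = (d : ℤ) * n := by
        have : (m : ℤ) = n * (d : ℤ) := by exact_mod_cast hmc
        linarith
      exact Int.natCast_dvd_natCast.mp ⟨n, hmz⟩
    · rintro ⟨c, rfl⟩
      exact ⟨c, by field_simp; push_cast; ring⟩
  have hωd : ω ^ d = 1 := (hone d).mpr dvd_rfl
  have hω0 : ω ≠ 0 := Complex.exp_ne_zero _
  -- conj ω = ω ^ (d-1)
  have habs : ‖ω‖ = 1 := by
    have hre : (2 * (Real.pi : ℂ) * Complex.I / d).re = 0 := by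
      simp [Complex.div_re]
    rw [hω, Complex.norm_exp, hre, Real.exp_zero]
  have hconj : (starRingEnd ℂ) ω = ω ^ (d - 1) := by
    have h1 : ω * (starRingEnd ℂ) ω = 1 := by
      rw [Complex.mul_conj, Complex.normSq_eq_norm_sq, habs]; norm_num
    have h2 : ω * ω ^ (d - 1) = 1 := by
      rw [← pow_succ']
      have : d - 1 + 1 = d := by omega
      rw [this, hωd]
    exact mul_left_cancel₀ hω0 (h1.trans h2.symm)
  -- geometric sum over full range
  have hgeom : ∀ m : ℕ, ∑ k ∈ range d, (ω ^ m) ^ k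
      = if d ∣ m then (d : ℂ) else 0 := by
    intro m
    by_cases h : d ∣ m
    · simp [(hone m).mpr h, h]
    · rw [if_neg h]
      have h1 : ω ^ m ≠ 1 := fun hh => h ((hone m).mp hh)
      rw [geom_sum_eq h1]
      have : (ω ^ m) ^ d = 1 := by rw [← pow_mul, mul_comm, pow_mul, hωd, one_pow]
      rw [this]; simp
  -- sum over Icc 1 (d-1)
  have hgeom' : ∀ m : ℕ, ∑ k ∈ Finset.Icc 1 (d - 1), (ω ^ m) ^ k
      = (if d ∣ m then (d : ℂ) else 0) - 1 := by
    intro m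
    have hIcc : Finset.Icc 1 (d - 1) = Finset.Ico 1 d := by
      rw [← Finset.Ico_add_one_right_eq_Icc]
      congr 1
      omega
    have h0 : ∑ k ∈ range d, (ω ^ m) ^ k
        = (ω ^ m) ^ 0 + ∑ k ∈ Finset.Ico 1 d, (ω ^ m) ^ k := by
      rw [Finset.range_eq_Ico]
      exact Finset.sum_eq_sum_Ico_succ_bot (by omega) _
    rw [hIcc, eq_sub_iff_add_eq, ← hgeom m, h0, pow_zero, add_comm]
  -- divisibility criterion
  have hjl : ∀ j ∈ range d, ∀ l ∈ range d, (d ∣ j + (d - 1) * l ↔ j = l) := by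
    intro j hj l hl
    rw [Finset.mem_range] at hj hl
    constructor
    · intro h
      have h1 : (d : ℤ) ∣ (j : ℤ) + ((d : ℤ) - 1) * l := by
        have := Int.natCast_dvd_natCast.mpr h
        push_cast [Nat.cast_sub (by omega : 1 ≤ d)] at this
        exact_mod_cast this
      have h2 : (d : ℤ) ∣ (j : ℤ) - l := by
        have heq : (j : ℤ) - l = ((j : ℤ) + ((d : ℤ) - 1) * l) - d * l := by ring
        rw [heq]
        exact dvd_sub h1 (dvd_mul_right _ _)
      have h3 : (j : ℤ) - l = 0 := by
        refine Int.eq_zero_of_abs_lt_dvd h2 ?_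
        rw [abs_lt]
        constructor <;> [push_cast; push_cast] <;> omega
      omega
    · rintro rfl
      exact ⟨j, by cases d with | zero => omega | succ d' => simp; ring⟩
  -- per-term identity
  have hterm : ∀ k ∈ Finset.Icc 1 (d - 1),
      ((1 / (1 - Real.cos (2 * k * Real.pi / d)) : ℝ) : ℂ)
        = 2 / (d : ℂ) ^ 2 * ∑ j ∈ range d, ∑ l ∈ range d,
            (j : ℂ) * l * (ω ^ (j + (d - 1) * l)) ^ k := by
    intro k hk
    rw [Finset.mem_Icc] at hk
    set z : ℂ := ω ^ k with hz
    have hzd : z ^ d = 1 := by rw [hz, ← pow_mul, mul_comm, pow_mul, hωd, one_pow]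
    have hz1 : z ≠ 1 := by
      intro h
      have := Nat.le_of_dvd (by omega) ((hone k).mp h)
      omega
    have hczd : ((starRingEnd ℂ) z) ^ d = 1 := by rw [← map_pow, hzd, map_one]
    have hcz1 : (starRingEnd ℂ) z ≠ 1 := by
      intro h
      apply hz1
      have := congrArg (starRingEnd ℂ) h
      simpa using this
    have h1z : (1 : ℂ) - z ≠ 0 := sub_ne_zero.mpr (Ne.symm hz1)
    have h1cz : (1 : ℂ) - (starRingEnd ℂ) z ≠ 0 := sub_ne_zero.mpr (Ne.symm hcz1)
    have hz1' : z - 1 ≠ 0 := sub_ne_zero.mpr hz1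
    have hcz1' : (starRingEnd ℂ) z - 1 ≠ 0 := sub_ne_zero.mpr hcz1
    set θ : ℝ := 2 * k * Real.pi / d with hθ
    have hzexp : z = Complex.exp ((θ : ℂ) * Complex.I) := by
      rw [hz, hpow k]
      congr 1
      push_cast [hθ]
      ring
    have hzz : z * (starRingEnd ℂ) z = 1 := by
      rw [Complex.mul_conj, Complex.normSq_eq_norm_sq, hzexp]
      rw [Complex.norm_exp_ofReal_mul_I]
      norm_num
    have hzre : z + (starRingEnd ℂ) z = ((2 * Real.cos θ : ℝ) : ℂ) := by
      rw [hzexp, Complex.add_conj, Complex.exp_ofReal_mul_I_re]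
    have hcos : ((1 - Real.cos θ : ℝ) : ℂ) * 2 = (1 - z) * (1 - (starRingEnd ℂ) z) := by
      push_cast at hzre ⊢
      linear_combination hzre - hzz
    have hprod : (1 - z) * (1 - (starRingEnd ℂ) z) ≠ 0 := mul_ne_zero h1z h1cz
    have hcne : ((1 - Real.cos θ : ℝ) : ℂ) ≠ 0 := by
      intro h0
      apply hprod
      rw [← hcos, h0, zero_mul]
    have h0r : (1 - Real.cos θ) ≠ 0 := fun h => hcne (by rw [h]; simp)
    have hfrac : ((1 / (1 - Real.cos θ) : ℝ) : ℂ)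
        = 2 / ((1 - z) * (1 - (starRingEnd ℂ) z)) := by
      rw [eq_div_iff hprod, ← hcos, ← mul_assoc, ← Complex.ofReal_mul, one_div,
        inv_mul_cancel₀ h0r, Complex.ofReal_one, one_mul]
    have hA : ∑ j ∈ range d, (j : ℂ) * z ^ j = d / (z - 1) := A_eq d z hzd hz1
    have hAc : ∑ j ∈ range d, (j : ℂ) * ((starRingEnd ℂ) z) ^ j
        = d / ((starRingEnd ℂ) z - 1) := A_eq d _ hczd hcz1
    have hexpand : (∑ j ∈ range d, (j : ℂ) * z ^ j)
          * (∑ l ∈ range d, (l : ℂ) * ((starRingEnd ℂ) z) ^ l)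
        = ∑ j ∈ range d, ∑ l ∈ range d, (j : ℂ) * l * (ω ^ (j + (d - 1) * l)) ^ k := by
      rw [Finset.sum_mul_sum]
      refine Finset.sum_congr rfl fun j hj => Finset.sum_congr rfl fun l hl => ?_
      have hczpow : (starRingEnd ℂ) z = ω ^ ((d - 1) * k) := by
        rw [hz, map_pow, hconj, ← pow_mul]
      have hexp : (ω ^ k) ^ j * (ω ^ ((d - 1) * k)) ^ l = (ω ^ (j + (d - 1) * l)) ^ k := by
        rw [← pow_mul, ← pow_mul, ← pow_add, ← pow_mul]
        congr 1
        ring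
      rw [hczpow, hz, ← hexp]
      ring
    rw [hfrac, ← hexpand, hA, hAc]
    field_simp
    ring
  -- main computation
  have key : ((∑ i ∈ Finset.Icc 1 (d - 1),
        1 / (1 - Real.cos (2 * i * Real.pi / d)) : ℝ) : ℂ) = ((d : ℂ) ^ 2 - 1) / 6 := by
    rw [Complex.ofReal_sum, Finset.sum_congr rfl hterm, ← Finset.mul_sum]
    have hswap : ∑ k ∈ Finset.Icc 1 (d - 1), ∑ j ∈ range d, ∑ l ∈ range d,
          (j : ℂ) * l * (ω ^ (j + (d - 1) * l)) ^ k
        = ∑ j ∈ range d, ∑ l ∈ range d, ∑ k ∈ Finset.Icc 1 (d - 1),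
          (j : ℂ) * l * (ω ^ (j + (d - 1) * l)) ^ k := by
      rw [Finset.sum_comm]
      exact Finset.sum_congr rfl fun j _ => Finset.sum_comm
    rw [hswap]
    have step1 : ∀ j ∈ range d, ∀ l ∈ range d,
        ∑ k ∈ Finset.Icc 1 (d - 1), (j : ℂ) * l * (ω ^ (j + (d - 1) * l)) ^ k
          = (j : ℂ) * l * ((if j = l then (d : ℂ) else 0) - 1) := by
      intro j hj l hl
      rw [← Finset.mul_sum, hgeom' _]
      simp only [hjl j hj l hl]
    rw [Finset.sum_congr rfl fun j hj => Finset.sum_congr rfl (step1 j hj)]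
    have step2 : ∀ j ∈ range d,
        ∑ l ∈ range d, (j : ℂ) * l * ((if j = l then (d : ℂ) else 0) - 1)
          = (d : ℂ) * (j : ℂ) ^ 2 - (j : ℂ) * ∑ l ∈ range d, (l : ℂ) := by
      intro j hj
      have h1 : ∀ l ∈ range d, (j : ℂ) * l * ((if j = l then (d : ℂ) else 0) - 1)
          = (if j = l then (d : ℂ) * j * l else 0) - (j : ℂ) * l := by
        intro l _
        split <;> ring
      rw [Finset.sum_congr rfl h1, Finset.sum_sub_distrib, Finset.sum_ite_eq, if_pos hj,
        ← Finset.mul_sum]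
      ring
    rw [Finset.sum_congr rfl step2, Finset.sum_sub_distrib, ← Finset.mul_sum, ← Finset.sum_mul,
      sum_id_c, sum_sq_c]
    field_simp
    ring
  exact_mod_cast key
end

section
/- Let d ≥ 3 and k be integers with gcd(k,d) = 1 and k ≥ 4d³/π, and set a_i = cos(⌊ik/d⌋·2π/k) for 1 ≤ i ≤ d−1. Then ∏_{i=1}^{d−1} (1 − a_i) ≥ d²/2^d. -/
open Real Finset

lemma prod_one_sub_zeta (n : ℕ) (hn : 2 ≤ n) :
    ∏ i ∈ Finset.Icc 1 (n - 1),
      ((1 : ℂ) - Complex.exp (2 * Real.pi * Complex.I / n) ^ i) = n := by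
  set ζ : ℂ := Complex.exp (2 * Real.pi * Complex.I / n) with hζdef
  have hζ : IsPrimitiveRoot ζ n := Complex.isPrimitiveRoot_exp n (by omega)
  have key : ∀ x : ℂ, x ^ n - 1 = ∏ i ∈ Finset.range n, (x - ζ ^ i) := by
    intro x
    have h := X_pow_sub_C_eq_prod hζ (by omega : 0 < n) (one_pow n)
    have h2 := congrArg (Polynomial.eval x) h
    simpa [Polynomial.eval_prod] using h2
  have hIcc : Finset.Ico 1 n = Finset.Icc 1 (n - 1) := by
    rw [← Finset.Ico_add_one_right_eq_Icc]; congr 1; omega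
  have key2 : ∀ x : ℂ, x ≠ 1 →
      ∏ i ∈ Finset.Icc 1 (n - 1), (x - ζ ^ i) = ∑ i ∈ Finset.range n, x ^ i := by
    intro x hx
    have h1 : (x - 1) * ∏ i ∈ Finset.Icc 1 (n - 1), (x - ζ ^ i)
        = (x - 1) * ∑ i ∈ Finset.range n, x ^ i := by
      have hsplit : ∏ i ∈ Finset.range n, (x - ζ ^ i)
          = (x - 1) * ∏ i ∈ Finset.Icc 1 (n - 1), (x - ζ ^ i) := by
        rw [Finset.range_eq_Ico, Finset.prod_eq_prod_Ico_succ_bot (by omega) _, hIcc]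
        simp
      rw [← hsplit, ← key x, ← geom_sum_mul x n, mul_comm]
    exact mul_left_cancel₀ (sub_ne_zero.2 hx) h1
  have hfun : (fun x : ℂ => ∏ i ∈ Finset.Icc 1 (n - 1), (x - ζ ^ i))
      = fun x => ∑ i ∈ Finset.range n, x ^ i := by
    apply Continuous.ext_on (dense_compl_singleton (1 : ℂ))
    · exact continuous_finset_prod _ (fun i _ => by continuity)
    · exact continuous_finset_sum _ (fun i _ => by continuity)
    · intro x hx; exact key2 x hx
  have h1 := congrFun hfun 1
  simpa using h1

lemma abs_one_sub_exp (θ : ℝ) (h0 : 0 ≤ Real.sin (θ / 2)) :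
    ‖(1 - Complex.exp (θ * Complex.I))‖ = 2 * Real.sin (θ / 2) := by
  have hsq : ‖(1 - Complex.exp (θ * Complex.I))‖ ^ 2
      = (2 * Real.sin (θ / 2)) ^ 2 := by
    rw [Complex.sq_norm, Complex.normSq_apply]
    simp only [Complex.sub_re, Complex.sub_im, Complex.one_re, Complex.one_im,
      Complex.exp_ofReal_mul_I_re, Complex.exp_ofReal_mul_I_im]
    have hc : Real.cos θ = Real.cos (θ / 2) ^ 2 - Real.sin (θ / 2) ^ 2 := by
      rw [← Real.cos_two_mul']; ring_nf
    nlinarith [Real.sin_sq_add_cos_sq (θ / 2), Real.sin_sq_add_cos_sq θ]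
  have h2 : (0:ℝ) ≤ ‖(1 - Complex.exp (θ * Complex.I))‖ := by positivity
  nlinarith [hsq, h2, h0]

lemma prod_two_sin (n : ℕ) (hn : 2 ≤ n) :
    ∏ i ∈ Finset.Icc 1 (n - 1), (2 * Real.sin (i * Real.pi / n)) = n := by
  have h := congrArg (fun z : ℂ => ‖z‖) (prod_one_sub_zeta n hn)
  rw [norm_prod, Complex.norm_natCast] at h
  refine Eq.trans (Finset.prod_congr rfl ?_) h
  intro i hi
  simp only [Finset.mem_Icc] at hi
  have hn0 : (n:ℝ) ≠ 0 := by positivity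
  have hz : Complex.exp (2 * Real.pi * Complex.I / n) ^ i
      = Complex.exp ((2 * Real.pi * i / n : ℝ) * Complex.I) := by
    rw [← Complex.exp_nat_mul]
    congr 1
    push_cast
    ring
  have hin : (i:ℝ) ≤ n := by exact_mod_cast Nat.le_of_lt (by omega)
  have hhalf : (2 * Real.pi * i / n) / 2 = i * Real.pi / n := by ring
  rw [hz, abs_one_sub_exp, hhalf]
  rw [hhalf]
  apply Real.sin_nonneg_of_nonneg_of_le_pi
  · positivity
  · rw [div_le_iff₀ (by positivity)]
    nlinarith [Real.pi_pos]

lemma prod_two_sin_sq (n : ℕ) (hn : 2 ≤ n) :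
    ∏ i ∈ Finset.Icc 1 (n - 1), (2 * Real.sin (i * Real.pi / n) ^ 2)
      = (n:ℝ) ^ 2 / 2 ^ (n - 1) := by
  have hcard : (Finset.Icc 1 (n - 1)).card = n - 1 := by
    rw [Nat.card_Icc]; omega
  have : ∀ i ∈ Finset.Icc 1 (n - 1),
      (2 * Real.sin (i * Real.pi / n) ^ 2) = (2 * Real.sin (i * Real.pi / n)) ^ 2 / 2 := by
    intro i _; ring
  rw [Finset.prod_congr rfl this, Finset.prod_div_distrib, Finset.prod_pow,
    prod_two_sin n hn, Finset.prod_const, hcard]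

lemma sin_mul_ge (t φ : ℝ) (ht0 : 0 ≤ t) (ht1 : t ≤ 1) (hφ0 : 0 ≤ φ) (hφπ : φ ≤ Real.pi) :
    t * Real.sin φ ≤ Real.sin (t * φ) := by
  have h := strictConcaveOn_sin_Icc.concaveOn.2 (Set.mem_Icc.mpr ⟨le_rfl, Real.pi_nonneg⟩)
    (Set.mem_Icc.mpr ⟨hφ0, hφπ⟩) (by linarith : (0:ℝ) ≤ 1 - t) ht0
    (by ring : (1 - t) + t = 1)
  simpa using h

lemma one_sub_sum_le_prod (s : Finset ℕ) (f : ℕ → ℝ) (h0 : ∀ i ∈ s, 0 ≤ f i)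
    (h1 : ∀ i ∈ s, f i ≤ 1) :
    1 - ∑ i ∈ s, f i ≤ ∏ i ∈ s, (1 - f i) := by
  induction s using Finset.cons_induction with
  | empty => simp
  | cons a s ha ih =>
    rw [Finset.prod_cons, Finset.sum_cons]
    have ihs := ih (fun i hi => h0 i (Finset.mem_cons_of_mem hi))
      (fun i hi => h1 i (Finset.mem_cons_of_mem hi))
    have hS : 0 ≤ ∑ i ∈ s, f i :=
      Finset.sum_nonneg (fun i hi => h0 i (Finset.mem_cons_of_mem hi))
    have ha0 := h0 a (Finset.mem_cons_self a s)
    have ha1 := h1 a (Finset.mem_cons_self a s)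
    nlinarith [mul_le_mul_of_nonneg_left ihs (by linarith : (0:ℝ) ≤ 1 - f a)]

set_option maxHeartbeats 1000000 in
/-- Lower bound `∏_{i=1}^{d−1} (1 − a_i) ≥ d²/2^d`. -/
theorem prod_one_sub_cos_ge (k d : ℕ) (hd : 3 ≤ d) (hcop : Nat.Coprime k d)
    (hk : 4 * (d : ℝ) ^ 3 / Real.pi ≤ k) (a : ℕ → ℝ)
    (ha : ∀ i, a i = Real.cos ((↑(i * k / d) : ℝ) * (2 * Real.pi / k))) :
    (d : ℝ) ^ 2 / 2 ^ d ≤ ∏ i ∈ Finset.Icc 1 (d - 1), (1 - a i) := by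
  have hπ := Real.pi_pos
  have hπ4 : Real.pi < 3.15 := Real.pi_lt_d2
  have hd3 : (3:ℝ) ≤ d := by exact_mod_cast hd
  have hd0 : (0:ℝ) < d := by linarith
  have hk0 : (0:ℝ) < k := lt_of_lt_of_le (by positivity) hk
  have hkd : 4 * (d:ℝ)^3 ≤ Real.pi * k := by
    rw [div_le_iff₀ hπ] at hk; linarith
  have hk2 : 2 * (d:ℝ)^2 ≤ k := by
    nlinarith [mul_le_mul_of_nonneg_right hd3 (sq_nonneg (d:ℝ)),
      mul_lt_mul_of_pos_right hπ4 hk0, sq_nonneg (d:ℝ)]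
  -- key pointwise bound
  have key : ∀ i ∈ Finset.Icc 1 (d-1),
      (1 - 2*(d:ℝ)/(i*k)) * (2 * Real.sin (i * Real.pi / d) ^ 2) ≤ 1 - a i := by
    intro i hi
    simp only [Finset.mem_Icc] at hi
    obtain ⟨hi1, hi2⟩ := hi
    have hi1' : (1:ℝ) ≤ i := by exact_mod_cast hi1
    have hid : (i:ℝ) + 1 ≤ d := by exact_mod_cast (by omega : i + 1 ≤ d)
    have hik0 : (0:ℝ) < i*k := by nlinarith
    set m : ℕ := i * k / d with hm
    have hmd : (m:ℝ) * d ≤ i * k := by exact_mod_cast Nat.div_mul_le_self (i*k) d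
    have hltn : i*k < d*m + d := by
      calc i*k = d*m + (i*k) % d := (Nat.div_add_mod (i*k) d).symm
        _ < d*m + d := Nat.add_lt_add_left (Nat.mod_lt (i*k) (by omega)) _
    have hlt : (i:ℝ)*k < m*d + d := by
      have := (Nat.cast_lt (α := ℝ)).mpr hltn
      push_cast at this
      linarith
    have hcos : 1 - a i = 2 * Real.sin ((m:ℝ) * Real.pi / k) ^ 2 := by
      rw [ha i]
      have harg : (m:ℝ) * (2*Real.pi/k) = 2 * ((m:ℝ)*Real.pi/k) := by ring
      rw [harg, Real.cos_two_mul']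
      have := Real.sin_sq_add_cos_sq ((m:ℝ)*Real.pi/k)
      linarith
    have hi0 : (i:ℝ) ≠ 0 := by positivity
    have hk0' : (k:ℝ) ≠ 0 := ne_of_gt hk0
    have hd0' : (d:ℝ) ≠ 0 := ne_of_gt hd0
    set t : ℝ := (m:ℝ)*d/(i*k) with ht
    set u : ℝ := (d:ℝ)/(i*k) with hu
    have h2u : 2*(d:ℝ)/(↑i*↑k) = 2*u := by rw [hu]; ring
    have htik : t * ((i:ℝ)*k) = (m:ℝ)*d := by
      rw [ht]; field_simp
    have huik : u * ((i:ℝ)*k) = (d:ℝ) := by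
      rw [hu]; field_simp
    have htphi : t * ((i:ℝ)*Real.pi/d) = (m:ℝ)*Real.pi/k := by
      rw [ht, div_mul_div_comm, div_eq_div_iff (by positivity) (by positivity)]
      ring
    have ht0 : 0 ≤ t := by positivity
    have ht1 : t ≤ 1 := by rw [ht, div_le_one hik0]; exact hmd
    have hφ0 : 0 ≤ (i:ℝ)*Real.pi/d := by positivity
    have hφπ : (i:ℝ)*Real.pi/d ≤ Real.pi := by
      rw [div_le_iff₀ hd0]; nlinarith
    have hsin := sin_mul_ge t _ ht0 ht1 hφ0 hφπ
    rw [htphi] at hsin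
    have hsφ : 0 ≤ Real.sin ((i:ℝ)*Real.pi/d) :=
      Real.sin_nonneg_of_nonneg_of_le_pi hφ0 hφπ
    have hu1 : 0 ≤ 1 - u := by
      rw [hu, sub_nonneg, div_le_one hik0]
      nlinarith
    have htlb : 1 - u ≤ t := by
      apply le_of_mul_le_mul_right _ hik0
      have e : (1-u)*((i:ℝ)*k) = (i:ℝ)*k - u*((i:ℝ)*k) := by ring
      rw [e, huik, htik]
      linarith
    have e1 : (t * Real.sin ((i:ℝ)*Real.pi/d))^2 ≤ Real.sin ((m:ℝ)*Real.pi/k)^2 :=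
      pow_le_pow_left₀ (mul_nonneg ht0 hsφ) hsin 2
    have e2 : (1-u)^2 ≤ t^2 := pow_le_pow_left₀ hu1 htlb 2
    rw [hcos, h2u]
    set S : ℝ := Real.sin ((i:ℝ)*Real.pi/d) with hS
    have c1 : (1 - 2*u) * (2*S^2) ≤ (1-u)^2 * (2*S^2) :=
      mul_le_mul_of_nonneg_right (by nlinarith [sq_nonneg u]) (by positivity)
    have c2 : (1-u)^2 * (2*S^2) ≤ t^2 * (2*S^2) :=
      mul_le_mul_of_nonneg_right e2 (by positivity)
    have c3 : t^2*(2*S^2) = 2*(t*S)^2 := by ring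
    linarith [e1]
  -- nonnegativity of lower-bound factors
  have hfac0 : ∀ i ∈ Finset.Icc 1 (d-1),
      0 ≤ (1 - 2*(d:ℝ)/(i*k)) * (2 * Real.sin (i * Real.pi / d) ^ 2) := by
    intro i hi
    simp only [Finset.mem_Icc] at hi
    have hi1' : (1:ℝ) ≤ i := by exact_mod_cast hi.1
    have hik0 : (0:ℝ) < i*k := by nlinarith
    have h1 : 2*(d:ℝ)/(i*k) ≤ 1 := by
      rw [div_le_one hik0]; nlinarith
    have h2 : (0:ℝ) ≤ 2 * Real.sin (i * Real.pi / d) ^ 2 := by positivity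
    nlinarith
  -- sum bound
  have hIccIco : Finset.Icc 1 (d-1) = Finset.Ico 1 d := by
    rw [← Finset.Ico_add_one_right_eq_Icc]; congr 1; omega
  have hsum : ∑ i ∈ Finset.Icc 1 (d-1), 2*(d:ℝ)/(i*k) ≤ 1/2 := by
    rw [hIccIco, Finset.sum_eq_sum_Ico_succ_bot (by omega : 1 < d)]
    have hbound : ∀ i ∈ Finset.Ico 2 d, 2*(d:ℝ)/(↑i*↑k) ≤ (d:ℝ)/k := by
      intro i hi
      simp only [Finset.mem_Ico] at hi
      have hi2 : (2:ℝ) ≤ i := by exact_mod_cast hi.1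
      have hik0 : (0:ℝ) < i*k := by nlinarith
      rw [div_le_div_iff₀ hik0 hk0]
      nlinarith [mul_nonneg (mul_nonneg hd0.le hk0.le) (by linarith : (0:ℝ) ≤ (i:ℝ) - 2)]
    have htail := Finset.sum_le_card_nsmul (Finset.Ico 2 d)
      (fun i => 2*(d:ℝ)/(↑i*↑k)) ((d:ℝ)/k) hbound
    rw [Nat.card_Ico, nsmul_eq_mul, Nat.cast_sub (by omega : 2 ≤ d)] at htail
    have htot : 2*(d:ℝ)/k + ((d:ℝ)-2)*((d:ℝ)/k) = (d:ℝ)^2/k := by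
      field_simp; ring
    have hfin : (d:ℝ)^2/k ≤ 1/2 := by
      rw [div_le_iff₀ hk0]; linarith
    push_cast at htail ⊢
    rw [one_mul]
    linarith
  -- Weierstrass
  have hW := one_sub_sum_le_prod (Finset.Icc 1 (d-1)) (fun i => 2*(d:ℝ)/(↑i*↑k))
    (fun i _ => div_nonneg (by positivity) (by positivity))
    (by
      intro i hi
      simp only [Finset.mem_Icc] at hi
      have hi1' : (1:ℝ) ≤ i := by exact_mod_cast hi.1
      have hik0 : (0:ℝ) < i*k := by nlinarith
      rw [div_le_one hik0]; nlinarith)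
  have hprodc : (1:ℝ)/2 ≤ ∏ i ∈ Finset.Icc 1 (d-1), (1 - 2*(d:ℝ)/(↑i*↑k)) := by
    refine le_trans ?_ hW
    linarith
  have hprod2 := prod_two_sin_sq d (by omega)
  have h2pow : (2:ℝ)^d = 2^(d-1) * 2 := by
    rw [← pow_succ]; congr 1; omega
  calc (d:ℝ)^2/2^d = (1/2) * ((d:ℝ)^2 / 2^(d-1)) := by rw [h2pow]; ring
    _ ≤ (∏ i ∈ Finset.Icc 1 (d-1), (1 - 2*(d:ℝ)/(↑i*↑k))) * ((d:ℝ)^2/2^(d-1)) :=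
        mul_le_mul_of_nonneg_right hprodc (by positivity)
    _ = ∏ i ∈ Finset.Icc 1 (d-1),
          ((1 - 2*(d:ℝ)/(↑i*↑k)) * (2 * Real.sin (i * Real.pi / d) ^ 2)) := by
        rw [Finset.prod_mul_distrib, hprod2]
    _ ≤ ∏ i ∈ Finset.Icc 1 (d-1), (1 - a i) := Finset.prod_le_prod hfac0 key
end
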